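/- arXiv:1504.02823 — 5 statements merged into one kernel-verified Lean document; each statement's English description precedes it below -/
import Mathlib

section
/- Let p be a prime, let λ be a partition, let B be an s-element β-set of λ, and let i, j ∈ {0,…,p−1} be such that B satisfies conditions (F1), (F2) and (F3) for (i,j). If there exists b ∈ B with b ≥ p and b − p ∉ B (equivalently, the p-core of λ is not λ itself), then i ≠ j. -/
/-- A partition, encoded as the weakly decreasing, eventually zero sequence of its parts. -/
def IsPartition (f : ℕ → ℕ) : Prop :=
  Antitone f ∧ ∃ N, ∀ i, N ≤ i → f i = 0

/-- `B` is the `s`-element β-set of the partition `f`: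
`B = {f k + (s - 1 - k) : 0 ≤ k < s}` (0-indexed parts), where `s` is at least the number
of parts of `f` (i.e. `f s = 0`). -/
def IsBetaSet (f : ℕ → ℕ) (s : ℕ) (B : Finset ℕ) : Prop :=
  f s = 0 ∧ B = (Finset.range s).image (fun k => f k + (s - 1 - k))

/-- Condition (F1) for runners `i`, `j`: every runner other than `i` and `j` has all its
beads pushed up (no gaps). -/
def F1 (p i j : ℕ) (B : Finset ℕ) : Prop :=
  ∀ k < p, k ≠ i → k ≠ j → ∀ b ∈ B, b % p = k → ∀ t < b, t % p = k → t ∈ B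

/-- Condition (F2) for runner `i`: if a position on runner `i` is unoccupied, every larger
position off runner `i` is unoccupied. -/
def F2 (p i : ℕ) (B : Finset ℕ) : Prop :=
  ∀ q : ℕ, q % p = i → q ∉ B → ∀ b ∈ B, q < b → b % p = i

/-- Condition (F3) for runner `j`: if a position on runner `j` is occupied, every smaller
position off runner `j` is occupied. -/
def F3 (p j : ℕ) (B : Finset ℕ) : Prop :=
  ∀ q ∈ B, q % p = j → ∀ d < q, d % p ≠ j → d ∈ B

/-- If a β-set of `λ` satisfies (F1), (F2), (F3) for `(i, j)` and the
`p`-core of `λ` is not `λ` itself (some bead can be pushed up), then `i ≠ j`. -/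
theorem runners_ne_of_not_core (p : ℕ) (hp : p.Prime) (f : ℕ → ℕ) (hf : IsPartition f)
    (s : ℕ) (B : Finset ℕ) (hB : IsBetaSet f s B)
    (i j : ℕ) (hi : i < p) (hj : j < p)
    (h1 : F1 p i j B) (h2 : F2 p i B) (h3 : F3 p j B)
    (hcore : ∃ b ∈ B, p ≤ b ∧ b - p ∉ B) :
    i ≠ j := by
  rintro rfl
  obtain ⟨b, hbB, hpb, hnot⟩ := hcore
  have hp2 : 2 ≤ p := hp.two_le
  have hbp : b - p < b := Nat.sub_lt (lt_of_lt_of_le (by omega) hpb) (by omega)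
  have hmod : (b - p) % p = b % p := by
    conv_rhs => rw [← Nat.sub_add_cancel hpb]
    simp [Nat.add_mod]
  by_cases hr : b % p = i
  · -- residue i = j case: consider d = b - p + 1
    set d := b - p + 1 with hd
    have hdlt : d < b := by omega
    have hdmod : d % p ≠ i := by
      have h' : d % p = (i + 1) % p := by
        have e : d % p = ((b - p) % p + 1 % p) % p := Nat.add_mod _ _ _
        rw [hmod, hr] at e
        rw [e, Nat.add_mod i 1, Nat.mod_eq_of_lt hi]
      intro h
      rw [h'] at h
      rcases Nat.lt_or_ge (i + 1) p with hlt | hge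
      · rw [Nat.mod_eq_of_lt hlt] at h; omega
      · have hip : i + 1 = p := by omega
        rw [hip, Nat.mod_self] at h; omega
    have hdB : d ∈ B := h3 b hbB hr d hdlt hdmod
    have : d % p = i := h2 (b - p) (by rw [hmod, hr]) hnot d hdB (by omega)
    exact hdmod this
  · -- residue not i: F1 pushes bead up
    exact hnot <| h1 (b % p) (Nat.mod_lt _ (by omega)) hr hr b hbB rfl (b - p) hbp hmod
end

section
/- Let p be a prime, let λ be a partition, and let B be an s-element β-set of λ satisfying conditions (F1), (F2) and (F3) for some i, j ∈ {0,…,p−1}. Let λ(0) and λ'(0) denote the 0-th terms of the p-adic expansions of λ and of the conjugate λ', let λ^{(i)} and λ^{(j)} be the runner-i and runner-j quotient partitions of B, and let κ_p(λ) be the partition represented by the pushed-up set B↑. Then: (a) λ − λ(0) = p·λ^{(i)}; (b) λ' − λ'(0) = p·(λ^{(j)})'; and (c) (λ'(0))' = κ_p(λ) + (λ − λ(0)). Consequently Φ(λ) := ((λ'(0))' | λ' − λ'(0)) equals (κ_p(λ) + p·λ^{(i)} | p·(λ^{(j)})'). -/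
/-- A partition is `p`-restricted if successive parts differ by at most `p - 1`. -/
def IsPRestricted (p : ℕ) (f : ℕ → ℕ) : Prop :=
  IsPartition f ∧ ∀ i, f i - f (i + 1) ≤ p - 1

/-- `c` is a `p`-adic expansion of the partition `f`. -/
def IsPAdicExpansion (p : ℕ) (f : ℕ → ℕ) (c : ℕ → ℕ → ℕ) : Prop :=
  (∀ i, IsPRestricted p (c i)) ∧
  ∃ N, (∀ i j, N ≤ i → c i j = 0) ∧ ∀ j, f j = ∑ i ∈ Finset.range N, p ^ i * c i j

/-- The conjugate partition: `(conjugate f) j = #{i : f i ≥ j + 1}`. -/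
noncomputable def conjugate (f : ℕ → ℕ) : ℕ → ℕ :=
  fun j => Nat.card {i : ℕ | j < f i}

/-- The `t`-th largest element of a finite set of naturals (`0` if `t ≥ card`). -/
def nthLargest (C : Finset ℕ) (t : ℕ) : ℕ :=
  ((C.sort (· ≤ ·)).reverse).getD t 0

/-- The partition represented by a finite set `C ⊆ ℕ`: its `t`-th part is the number of
vacant positions below the `t`-th largest element of `C`. -/
def partOfSet (C : Finset ℕ) : ℕ → ℕ :=
  fun t => ((Finset.range (nthLargest C t)).filter (fun u => u ∉ C)).card

/-- The beads of `B` lying on runner `k` (positions congruent to `k` mod `p`). -/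
def runnerSet (p k : ℕ) (B : Finset ℕ) : Finset ℕ :=
  B.filter (fun b => b % p = k)

/-- The runner-`k` quotient partition of the abacus `B`: its `t`-th part is the number of
vacant positions on runner `k` above the `t`-th lowest... i.e. below the `t`-th largest
occupied position of runner `k`. -/
def quotientPart (p k : ℕ) (B : Finset ℕ) : ℕ → ℕ :=
  fun t => ((Finset.range (nthLargest (runnerSet p k B) t)).filter
      (fun u => u % p = k ∧ u ∉ B)).card

/-- The pushed-up abacus: each runner keeps its number of beads, pushed to the top. -/
def pushUp (p : ℕ) (B : Finset ℕ) : Finset ℕ :=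
  (Finset.range p).biUnion
    (fun k => (Finset.range (runnerSet p k B).card).image (fun t => k + t * p))



def above (S : Finset ℕ) (b : ℕ) : ℕ := (S.filter (fun x => b < x)).card

lemma above_lt_card {S : Finset ℕ} {b : ℕ} (hb : b ∈ S) : above S b < S.card := by
  apply Finset.card_lt_card
  constructor
  · exact Finset.filter_subset _ _
  · intro h
    have := h hb
    simp at this

lemma above_anti {S : Finset ℕ} {b b' : ℕ} (h : b ≤ b') : above S b' ≤ above S b := by
  apply Finset.card_le_card
  intro x hx
  simp only [Finset.mem_filter] at *
  exact ⟨hx.1, by omega⟩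

lemma above_inj {S : Finset ℕ} {b b' : ℕ} (hb : b ∈ S) (hb' : b' ∈ S)
    (h : above S b = above S b') : b = b' := by
  by_contra hne
  rcases Nat.lt_or_ge b b' with hlt | hge
  · have : above S b' < above S b := by
      apply Finset.card_lt_card
      constructor
      · intro x hx
        simp only [Finset.mem_filter] at *
        exact ⟨hx.1, by omega⟩
      · intro hsub
        have := hsub (by simp only [Finset.mem_filter]; exact ⟨hb', hlt⟩)
        simp at this
    omega
  · have hlt : b' < b := by omega
    have : above S b < above S b' := by
      apply Finset.card_lt_card
      constructor
      · intro x hx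
        simp only [Finset.mem_filter] at *
        exact ⟨hx.1, by omega⟩
      · intro hsub
        have := hsub (by simp only [Finset.mem_filter]; exact ⟨hb, hlt⟩)
        simp at this
    omega

lemma card_split {S : Finset ℕ} {b : ℕ} (hb : b ∈ S) :
    S.card = above S b + (S.filter (fun x => x < b)).card + 1 := by
  have h1 := Finset.card_filter_add_card_filter_not (s := S) (p := fun x => b < x)
  have h2 : S.filter (fun x => ¬ b < x) = insert b (S.filter (fun x => x < b)) := by
    ext x
    simp only [Finset.mem_filter, Finset.mem_insert]
    constructor
    · rintro ⟨hx, hle⟩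
      rcases Nat.lt_or_ge x b with h | h
      · exact Or.inr ⟨hx, h⟩
      · left; omega
    · rintro (rfl | ⟨hx, hlt⟩)
      · exact ⟨hb, by omega⟩
      · exact ⟨hx, by omega⟩
  have h3 : b ∉ S.filter (fun x => x < b) := by simp
  rw [h2, Finset.card_insert_of_notMem h3] at h1
  unfold above
  omega

lemma nthLargest_spec {S : Finset ℕ} {t : ℕ} (ht : t < S.card) :
    nthLargest S t ∈ S ∧ above S (nthLargest S t) = t := by
  classical
  set l := S.sort (· ≤ ·) with hl
  have hlen : l.length = S.card := Finset.length_sort _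
  have hm : S.card - 1 - t < l.length := by rw [hlen]; omega
  have hb : nthLargest S t = l[S.card - 1 - t] := by
    unfold nthLargest
    rw [← hl]
    rw [List.getD_eq_getElem _ _ (by rw [List.length_reverse, hlen]; omega),
      List.getElem_reverse]
    congr 1
    rw [hlen]
  set m := S.card - 1 - t with hmdef
  have hsm : StrictMono l.get := (Finset.sortedLT_sort S).strictMono_get
  have hmem : l[m] ∈ S := by
    rw [← Finset.mem_sort (α := ℕ) (· ≤ ·)]
    exact List.getElem_mem _
  refine ⟨hb ▸ hmem, ?_⟩
  rw [hb]
  have hcount : above S l[m] = (l.filter (fun x => decide (l[m] < x))).length := by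
    unfold above
    rw [Finset.card_def, Finset.filter_val, ← Finset.sort_eq S (· ≤ ·), ← hl,
      Multiset.filter_coe, Multiset.coe_card]
  rw [hcount]
  have hsplit : l.take (m+1) ++ l.drop (m+1) = l := List.take_append_drop _ _
  have htake : (l.take (m+1)).filter (fun x => decide (l[m] < x)) = [] := by
    rw [List.filter_eq_nil_iff]
    intro a ha
    obtain ⟨k, hk, hka⟩ := List.mem_iff_getElem.mp ha
    have hk' : k < m + 1 := by
      have := List.length_take (i := m+1) (l := l); omega
    have : a ≤ l[m] := by
      rw [← hka, List.getElem_take]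
      rcases Nat.lt_or_ge k m with h | h
      · exact le_of_lt (hsm (show (⟨k, by omega⟩ : Fin l.length) < ⟨m, hm⟩ from h))
      · have : k = m := by omega
        subst this; exact le_refl _
    simp only [decide_eq_true_eq]
    omega
  have hdrop : (l.drop (m+1)).filter (fun x => decide (l[m] < x)) = l.drop (m+1) := by
    rw [List.filter_eq_self]
    intro a ha
    obtain ⟨k, hk, hka⟩ := List.mem_iff_getElem.mp ha
    have hk' : m + 1 + k < l.length := by
      have := List.length_drop (i := m+1) (l := l); omega
    have : l[m] < a := by
      rw [← hka, List.getElem_drop]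
      exact hsm (show (⟨m, hm⟩ : Fin l.length) < ⟨m+1+k, hk'⟩ from by simp; omega)
    simp only [decide_eq_true_eq]
    exact this
  calc (List.filter (fun x => decide (l[m] < x)) l).length
      = (List.filter (fun x => decide (l[m] < x)) (List.take (m+1) l ++ List.drop (m+1) l)).length := by
        rw [hsplit]
    _ = t := by
        rw [List.filter_append, htake, hdrop, List.nil_append, List.length_drop]
        omega

lemma nthLargest_mem {S : Finset ℕ} {t : ℕ} (ht : t < S.card) : nthLargest S t ∈ S :=
  (nthLargest_spec ht).1

lemma above_nthLargest {S : Finset ℕ} {t : ℕ} (ht : t < S.card) :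
    above S (nthLargest S t) = t := (nthLargest_spec ht).2

lemma nthLargest_eq_of {S : Finset ℕ} {t b : ℕ} (hb : b ∈ S) (h : above S b = t) :
    nthLargest S t = b := by
  have ht : t < S.card := h ▸ above_lt_card hb
  exact above_inj (nthLargest_mem ht) hb (by rw [above_nthLargest ht, h])

lemma nthLargest_of_le {S : Finset ℕ} {t : ℕ} (ht : S.card ≤ t) : nthLargest S t = 0 := by
  unfold nthLargest
  apply List.getD_eq_default
  rw [List.length_reverse, Finset.length_sort]
  exact ht

lemma partOfSet_of_le {S : Finset ℕ} {t : ℕ} (ht : S.card ≤ t) : partOfSet S t = 0 := by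
  unfold partOfSet
  rw [nthLargest_of_le ht]
  simp

/-- number of vacancies below `b`. -/
def gapsBelow (S : Finset ℕ) (b : ℕ) : ℕ := ((Finset.range b).filter (fun u => u ∉ S)).card

lemma partOfSet_eq_gapsBelow (S : Finset ℕ) (t : ℕ) :
    partOfSet S t = gapsBelow S (nthLargest S t) := rfl

lemma gapsBelow_add (S : Finset ℕ) (b : ℕ) :
    gapsBelow S b + (S.filter (fun x => x < b)).card = b := by
  have h1 := Finset.card_filter_add_card_filter_not (s := Finset.range b)
    (p := fun u => u ∉ S)
  have h2 : (Finset.range b).filter (fun u => ¬ u ∉ S) = S.filter (fun x => x < b) := by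
    ext x
    simp only [Finset.mem_filter, Finset.mem_range, not_not]
    tauto
  rw [h2] at h1
  unfold gapsBelow
  rw [Finset.card_range] at h1
  exact h1

lemma gapsBelow_mono (S : Finset ℕ) {b b' : ℕ} (h : b ≤ b') :
    gapsBelow S b ≤ gapsBelow S b' := by
  apply Finset.card_le_card
  intro x hx
  simp only [Finset.mem_filter, Finset.mem_range] at *
  exact ⟨by omega, hx.2⟩

lemma partOfSet_formula {S : Finset ℕ} {t : ℕ} (ht : t < S.card) :
    partOfSet S t + (S.card - 1 - t) = nthLargest S t := by
  have h1 := gapsBelow_add S (nthLargest S t)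
  have h2 := card_split (nthLargest_mem ht)
  rw [above_nthLargest ht] at h2
  rw [partOfSet_eq_gapsBelow]
  omega

lemma nthLargest_lt {S : Finset ℕ} {t t' : ℕ} (h : t < t') (ht' : t' < S.card) :
    nthLargest S t' < nthLargest S t := by
  have h1 := above_nthLargest ht'
  have h2 := above_nthLargest (lt_trans h ht')
  rcases Nat.lt_or_ge (nthLargest S t') (nthLargest S t) with hlt | hge
  · exact hlt
  · exfalso
    have := above_anti (S := S) hge
    omega

lemma partOfSet_antitone (S : Finset ℕ) : Antitone (partOfSet S) := by
  apply antitone_nat_of_succ_le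
  intro t
  rcases Nat.lt_or_ge (t+1) S.card with h | h
  · rw [partOfSet_eq_gapsBelow, partOfSet_eq_gapsBelow]
    exact gapsBelow_mono S (le_of_lt (nthLargest_lt (Nat.lt_succ_self t) h))
  · rw [partOfSet_of_le h]
    exact Nat.zero_le _

/-- nothing in `S` lies strictly between consecutive ranked elements. -/
lemma no_mem_between {S : Finset ℕ} {t : ℕ} (ht : t + 1 < S.card) {x : ℕ} (hx : x ∈ S)
    (h1 : nthLargest S (t+1) < x) (h2 : x < nthLargest S t) : False := by
  have ha1 := above_nthLargest ht
  have ha2 := above_nthLargest (Nat.lt_of_succ_lt ht)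
  -- above S x ≤ t
  have hle : above S x ≤ t := by
    have hsub : S.filter (fun y => x < y) ⊆ (S.filter (fun y => nthLargest S (t+1) < y)).erase x := by
      intro y hy
      simp only [Finset.mem_filter, Finset.mem_erase] at *
      refine ⟨by omega, hy.1, by omega⟩
    have := Finset.card_le_card hsub
    rw [Finset.card_erase_of_mem (by simp only [Finset.mem_filter]; exact ⟨hx, h1⟩)] at this
    unfold above at *
    omega
  -- above S x ≥ t + 1
  have hge : t + 1 ≤ above S x := by
    have hsub : insert (nthLargest S t) (S.filter (fun y => nthLargest S t < y)) ⊆ S.filter (fun y => x < y) := by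
      intro y hy
      simp only [Finset.mem_filter, Finset.mem_insert] at *
      rcases hy with rfl | ⟨hy1, hy2⟩
      · exact ⟨nthLargest_mem (Nat.lt_of_succ_lt ht), h2⟩
      · exact ⟨hy1, by omega⟩
    have := Finset.card_le_card hsub
    rw [Finset.card_insert_of_notMem (by simp)] at this
    unfold above at *
    omega
  omega

/-! ### β-sets represent their partition -/

lemma betaSet_card {f : ℕ → ℕ} (hf : IsPartition f) {s : ℕ} {B : Finset ℕ}
    (hB : IsBetaSet f s B) : B.card = s := by
  obtain ⟨hfs, hBdef⟩ := hB
  rw [hBdef, Finset.card_image_of_injOn, Finset.card_range]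
  intro a ha b hb hab
  simp only [Finset.coe_range, Set.mem_Iio] at ha hb
  simp only at hab
  by_contra hne
  rcases Nat.lt_or_ge a b with h | h
  · have := hf.1 (le_of_lt h); omega
  · have hba : b < a := by omega
    have := hf.1 (le_of_lt hba); omega

lemma betaSet_nthLargest {f : ℕ → ℕ} (hf : IsPartition f) {s : ℕ} {B : Finset ℕ}
    (hB : IsBetaSet f s B) {t : ℕ} (ht : t < s) :
    nthLargest B t = f t + (s - 1 - t) := by
  obtain ⟨hfs, hBdef⟩ := hB
  have hmono : ∀ a b : ℕ, a < b → b < s → f b + (s - 1 - b) < f a + (s - 1 - a) := by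
    intro a b hab hbs
    have := hf.1 (le_of_lt hab)
    omega
  apply nthLargest_eq_of
  · rw [hBdef]
    exact Finset.mem_image_of_mem _ (Finset.mem_range.mpr ht)
  · unfold above
    have : B.filter (fun x => f t + (s - 1 - t) < x)
        = (Finset.range t).image (fun k => f k + (s - 1 - k)) := by
      rw [hBdef]
      ext x
      simp only [Finset.mem_filter, Finset.mem_image, Finset.mem_range]
      constructor
      · rintro ⟨⟨k, hk, rfl⟩, hlt⟩
        refine ⟨k, ?_, rfl⟩
        by_contra hge
        have hge' : t ≤ k := by omega
        rcases Nat.eq_or_lt_of_le hge' with rfl | h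
        · omega
        · have := hmono t k h hk; omega
      · rintro ⟨k, hk, rfl⟩
        exact ⟨⟨k, by omega, rfl⟩, hmono k t hk ht⟩
    rw [this, Finset.card_image_of_injOn, Finset.card_range]
    intro a ha b hb hab
    simp only [Finset.coe_range, Set.mem_Iio] at ha hb
    simp only at hab
    by_contra hne
    rcases Nat.lt_or_ge a b with h | h
    · have := hmono a b h (by omega); omega
    · have := hmono b a (by omega) (by omega); omega

lemma betaSet_partOfSet {f : ℕ → ℕ} (hf : IsPartition f) {s : ℕ} {B : Finset ℕ}
    (hB : IsBetaSet f s B) : ∀ t, partOfSet B t = f t := by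
  intro t
  have hcard := betaSet_card hf hB
  rcases Nat.lt_or_ge t s with ht | ht
  · have h1 := partOfSet_formula (S := B) (t := t) (by omega)
    rw [betaSet_nthLargest hf hB ht] at h1
    omega
  · rw [partOfSet_of_le (by omega)]
    have h1 : f t ≤ f s := hf.1 ht
    have h2 := hB.1
    omega

/-! ### runners and their index sets -/

/-- the indices (row numbers) of the beads on runner `k`. -/
def ridx (p k : ℕ) (S : Finset ℕ) : Finset ℕ := (runnerSet p k S).image (fun u => u / p)

lemma runnerSet_decomp {p k : ℕ} {S : Finset ℕ} {x : ℕ} (hx : x ∈ runnerSet p k S) :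
    x = k + (x / p) * p := by
  have h1 : x % p = k := (Finset.mem_filter.mp hx).2
  have := Nat.mod_add_div' x p
  omega

lemma mem_ridx {p k : ℕ} (hk : k < p) {S : Finset ℕ} {v : ℕ} :
    v ∈ ridx p k S ↔ k + v * p ∈ S := by
  constructor
  · rintro hv
    obtain ⟨u, hu, rfl⟩ := Finset.mem_image.mp hv
    have := runnerSet_decomp hu
    rw [← this]
    exact (Finset.mem_filter.mp hu).1
  · intro h
    apply Finset.mem_image.mpr
    refine ⟨k + v * p, Finset.mem_filter.mpr ⟨h, ?_⟩, ?_⟩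
    · rw [Nat.add_mul_mod_self_right, Nat.mod_eq_of_lt hk]
    · rw [Nat.add_mul_div_right _ _ (by omega : 0 < p), Nat.div_eq_of_lt hk]
      omega

lemma ridx_card {p k : ℕ} {S : Finset ℕ} : (ridx p k S).card = (runnerSet p k S).card := by
  apply Finset.card_image_of_injOn
  intro a ha b hb hab
  have h1 := runnerSet_decomp ha
  have h2 := runnerSet_decomp hb
  simp only at hab
  rw [hab] at h1
  omega

lemma ridx_nthLargest {p k : ℕ} (hk : k < p) {S : Finset ℕ} {t : ℕ}
    (ht : t < (runnerSet p k S).card) :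
    nthLargest (runnerSet p k S) t = k + (nthLargest (ridx p k S) t) * p := by
  have htr : t < (ridx p k S).card := by rw [ridx_card]; exact ht
  set v := nthLargest (ridx p k S) t with hv
  apply nthLargest_eq_of
  · exact Finset.mem_filter.mpr ⟨(mem_ridx hk).mp (nthLargest_mem htr), by
      rw [Nat.add_mul_mod_self_right, Nat.mod_eq_of_lt hk]⟩
  · have ha := above_nthLargest htr
    rw [← hv] at ha
    rw [← ha]
    unfold above
    have himg : (runnerSet p k S).filter (fun x => k + v * p < x)
        = ((ridx p k S).filter (fun w => v < w)).image (fun w => k + w * p) := by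
      ext x
      simp only [Finset.mem_filter, Finset.mem_image]
      constructor
      · rintro ⟨hx, hlt⟩
        refine ⟨x / p, ⟨(mem_ridx hk).mpr ?_, ?_⟩, ?_⟩
        · rw [← runnerSet_decomp hx]; exact (Finset.mem_filter.mp hx).1
        · have := runnerSet_decomp hx
          by_contra hle
          have : x / p ≤ v := by omega
          have : x ≤ k + v * p := by
            calc x = k + (x/p) * p := runnerSet_decomp hx
            _ ≤ k + v * p := by
              have : x / p * p ≤ v * p := Nat.mul_le_mul_right p this
              omega
          omega
        · exact (runnerSet_decomp hx).symm
      · rintro ⟨w, ⟨hw, hvw⟩, rfl⟩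
        refine ⟨Finset.mem_filter.mpr ⟨(mem_ridx hk).mp hw, by
          rw [Nat.add_mul_mod_self_right, Nat.mod_eq_of_lt hk]⟩, ?_⟩
        have : v * p < w * p := by
          apply Nat.mul_lt_mul_right (by omega : 0 < p) |>.mpr hvw
        omega
    rw [himg, Finset.card_image_of_injOn]
    intro a _ b _ hab
    simp only at hab
    have h1 : a * p = b * p := by omega
    exact Nat.eq_of_mul_eq_mul_right (by omega) h1

lemma quotientPart_eq_partOfSet {p k : ℕ} (hk : k < p) (S : Finset ℕ) (t : ℕ) :
    quotientPart p k S t = partOfSet (ridx p k S) t := by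
  rcases Nat.lt_or_ge t (runnerSet p k S).card with ht | ht
  · have htr : t < (ridx p k S).card := by rw [ridx_card]; exact ht
    unfold quotientPart partOfSet
    rw [ridx_nthLargest hk ht]
    set v := nthLargest (ridx p k S) t with hv
    apply Finset.card_bij (fun u _ => u / p)
    · intro u hu
      simp only [Finset.mem_filter, Finset.mem_range] at *
      have hur := hu.1
      have hmod := hu.2.1
      have hnot := hu.2.2
      have hdecomp : u = k + (u/p) * p := by
        have := Nat.mod_add_div' u p; omega
      constructor
      · -- u / p < v
        by_contra hle
        have hge : v ≤ u / p := by omega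
        have : k + v * p ≤ k + (u/p) * p := by
          have := Nat.mul_le_mul_right p hge; omega
        omega
      · intro hmem
        have := (mem_ridx hk).mp hmem
        rw [← hdecomp] at this
        exact hnot this
    · intro a ha b hb hab
      simp only [Finset.mem_filter, Finset.mem_range] at ha hb
      have h1 : a = k + (a/p)*p := by have := Nat.mod_add_div' a p; omega
      have h2 : b = k + (b/p)*p := by have := Nat.mod_add_div' b p; omega
      rw [hab] at h1
      omega
    · intro w hw
      simp only [Finset.mem_filter, Finset.mem_range] at hw
      refine ⟨k + w * p, Finset.mem_filter.mpr ⟨Finset.mem_range.mpr ?_, ?_, ?_⟩, ?_⟩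
      · have : w * p < v * p := Nat.mul_lt_mul_right (by omega : 0 < p) |>.mpr hw.1
        omega
      · rw [Nat.add_mul_mod_self_right, Nat.mod_eq_of_lt hk]
      · intro hmem
        exact hw.2 ((mem_ridx hk).mpr hmem)
      · rw [Nat.add_mul_div_right _ _ (by omega : 0 < p), Nat.div_eq_of_lt hk]; omega
  · have htr : (ridx p k S).card ≤ t := by rw [ridx_card]; exact ht
    unfold quotientPart
    rw [nthLargest_of_le ht, partOfSet_of_le htr]
    simp

lemma quotientPart_of_le {p k : ℕ} {S : Finset ℕ} {t : ℕ}
    (ht : (runnerSet p k S).card ≤ t) : quotientPart p k S t = 0 := by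
  unfold quotientPart
  rw [nthLargest_of_le ht]
  simp

/-! ### downward-closed runners -/

/-- runner `i` of `S` is downward closed -/
def DC (p i : ℕ) (S : Finset ℕ) : Prop := ∀ x ∈ S, x % p = i → p ≤ x → x - p ∈ S

lemma dc_chain {p i : ℕ} (hp : 0 < p) {S : Finset ℕ} (hdc : DC p i S) :
    ∀ k u, u % p = i → u + k * p ∈ S → u ∈ S := by
  intro k
  induction k with
  | zero => intro u _ h; simpa using h
  | succ n ih =>
    intro u hu h
    have hx : (u + (n+1) * p) % p = i := by
      rw [Nat.add_mul_mod_self_right]; exact hu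
    have hxp : p ≤ u + (n+1) * p := by
      have : (n+1) * p = n * p + p := by ring
      omega
    have := hdc _ h hx hxp
    have heq : u + (n+1) * p - p = u + n * p := by
      have : (n+1) * p = n * p + p := by ring
      omega
    rw [heq] at this
    exact ih u hu this

lemma dc_le_mem {p i : ℕ} (hp : 0 < p) {S : Finset ℕ} (hdc : DC p i S)
    {u x : ℕ} (hu : u % p = i) (hx : x ∈ S) (hxi : x % p = i) (hle : u ≤ x) : u ∈ S := by
  have hdvd : p ∣ (x - u) := by
    have : u % p = x % p := by omega
    exact (Nat.modEq_iff_dvd' hle).mp this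
  obtain ⟨k, hk⟩ := hdvd
  rw [Nat.mul_comm] at hk
  apply dc_chain hp hdc k u hu
  have : u + k * p = x := by omega
  rw [this]
  exact hx

lemma dc_ridx_step {p i : ℕ} (hp : 0 < p) (hi : i < p) {S : Finset ℕ} (hdc : DC p i S) :
    ∀ v, v + 1 ∈ ridx p i S → v ∈ ridx p i S := by
  intro v hv
  rw [mem_ridx hi] at *
  have h1 : (i + (v+1) * p) % p = i := by
    rw [Nat.add_mul_mod_self_right, Nat.mod_eq_of_lt hi]
  have h2 : p ≤ i + (v+1) * p := by
    have : (v+1) * p = v * p + p := by ring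
    omega
  have := hdc _ hv h1 h2
  have heq : i + (v+1) * p - p = i + v * p := by
    have : (v+1) * p = v * p + p := by ring
    omega
  rwa [heq] at this

lemma range_of_step {E : Finset ℕ} (hstep : ∀ v, v + 1 ∈ E → v ∈ E) :
    E = Finset.range E.card := by
  have hdown : ∀ v ∈ E, ∀ w, w ≤ v → w ∈ E := by
    intro v hv w hw
    have : ∀ d, v - d ∈ E := by
      intro d
      induction d with
      | zero => simpa using hv
      | succ n ih =>
        rcases Nat.eq_zero_or_pos (v - n) with h | h
        · have : v - (n+1) = 0 := by omega
          rw [this]; rwa [h] at ih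
        · have heq : v - n = (v - (n+1)) + 1 := by omega
          rw [heq] at ih
          exact hstep _ ih
    have := this (v - w)
    rwa [show v - (v - w) = w by omega] at this
  ext k
  simp only [Finset.mem_range]
  constructor
  · intro hk
    have hsub : Finset.range (k+1) ⊆ E := by
      intro x hx
      exact hdown k hk x (by simpa using Nat.lt_succ_iff.mp (Finset.mem_range.mp hx))
    have := Finset.card_le_card hsub
    rw [Finset.card_range] at this
    omega
  · intro hk
    by_contra hne
    have hsub : E ⊆ Finset.range k := by
      intro x hx
      simp only [Finset.mem_range]
      by_contra hge
      exact hne (hdown x hx k (by omega))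
    have := Finset.card_le_card hsub
    rw [Finset.card_range] at this
    omega

/-! ### pushdown -/

/-- `S` with runner `i` bottom-justified. -/
def pushdown (p i : ℕ) (S : Finset ℕ) : Finset ℕ :=
  S.filter (fun b => b % p ≠ i) ∪
    (Finset.range (runnerSet p i S).card).image (fun t => i + t * p)

lemma mem_pushdown {p i : ℕ} (hi : i < p) {S : Finset ℕ} {x : ℕ} :
    x ∈ pushdown p i S ↔
      (x % p ≠ i ∧ x ∈ S) ∨ (x % p = i ∧ x / p < (runnerSet p i S).card) := by
  unfold pushdown
  rw [Finset.mem_union, Finset.mem_filter, Finset.mem_image]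
  constructor
  · rintro (⟨h1, h2⟩ | ⟨t, ht, rfl⟩)
    · exact Or.inl ⟨h2, h1⟩
    · right
      constructor
      · rw [Nat.add_mul_mod_self_right, Nat.mod_eq_of_lt hi]
      · rw [Nat.add_mul_div_right _ _ (by omega : 0 < p), Nat.div_eq_of_lt hi,
          Finset.mem_range] at *
        omega
  · rintro (⟨h1, h2⟩ | ⟨h1, h2⟩)
    · exact Or.inl ⟨h2, h1⟩
    · right
      refine ⟨x / p, Finset.mem_range.mpr h2, ?_⟩
      have := Nat.mod_add_div' x p
      omega

lemma runnerSet_pushdown {p i : ℕ} (hi : i < p) (S : Finset ℕ) :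
    runnerSet p i (pushdown p i S)
      = (Finset.range (runnerSet p i S).card).image (fun t => i + t * p) := by
  ext x
  rw [runnerSet, Finset.mem_filter, mem_pushdown hi]
  constructor
  · rintro ⟨h1 | h1, h2⟩
    · exact absurd h2 h1.1
    · rw [Finset.mem_image]
      refine ⟨x / p, Finset.mem_range.mpr h1.2, ?_⟩
      have := Nat.mod_add_div' x p
      omega
  · intro h
    rw [Finset.mem_image] at h
    obtain ⟨t, ht, rfl⟩ := h
    have hmod : (i + t * p) % p = i := by
      rw [Nat.add_mul_mod_self_right, Nat.mod_eq_of_lt hi]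
    refine ⟨Or.inr ⟨hmod, ?_⟩, hmod⟩
    rw [Nat.add_mul_div_right _ _ (by omega : 0 < p), Nat.div_eq_of_lt hi, Finset.mem_range] at *
    omega

lemma card_runnerSet_pushdown {p i : ℕ} (hi : i < p) (S : Finset ℕ) :
    (runnerSet p i (pushdown p i S)).card = (runnerSet p i S).card := by
  rw [runnerSet_pushdown hi, Finset.card_image_of_injOn, Finset.card_range]
  intro a _ b _ hab
  simp only at hab
  have h1 : a * p = b * p := by omega
  exact Nat.eq_of_mul_eq_mul_right (by omega) h1

lemma dc_pushdown {p i : ℕ} (hi : i < p) (S : Finset ℕ) : DC p i (pushdown p i S) := by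
  intro x hx hmod hp
  rw [mem_pushdown hi] at *
  rcases hx with ⟨h1, _⟩ | ⟨_, h2⟩
  · exact absurd hmod h1
  · right
    have hx0 : x - p + p = x := by omega
    have hm1 : (x - p + p) % p = (x - p) % p := Nat.add_mod_right _ _
    have hm2 : (x - p + p) / p = (x - p) / p + 1 := Nat.add_div_right _ (by omega)
    rw [hx0] at hm1 hm2
    exact ⟨by omega, by omega⟩

lemma pushdown_eq_of_dc {p i : ℕ} (hp : 0 < p) (hi : i < p) {S : Finset ℕ}
    (hdc : DC p i S) : pushdown p i S = S := by
  have hridx : ridx p i S = Finset.range (runnerSet p i S).card := by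
    rw [range_of_step (dc_ridx_step hp hi hdc), ridx_card]
  ext x
  rw [mem_pushdown hi]
  constructor
  · rintro (⟨_, h⟩ | ⟨h1, h2⟩)
    · exact h
    · have hmem : x / p ∈ ridx p i S := by rw [hridx, Finset.mem_range]; exact h2
      rw [mem_ridx hi] at hmem
      have hd := Nat.mod_add_div' x p
      rwa [show i + x / p * p = x by omega] at hmem
  · intro hx
    by_cases h : x % p = i
    · right
      refine ⟨h, ?_⟩
      have hmem : x / p ∈ ridx p i S := by
        rw [mem_ridx hi]
        have hd := Nat.mod_add_div' x p
        rwa [show i + x / p * p = x by omega]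
      rw [hridx, Finset.mem_range] at hmem
      exact hmem
    · exact Or.inl ⟨h, hx⟩

lemma F2_pushdown {p i : ℕ} (hp : 0 < p) (hi : i < p) {S : Finset ℕ} (hF2 : F2 p i S) :
    F2 p i (pushdown p i S) := by
  intro q hq hqn b hb hqb
  rw [mem_pushdown hi] at hqn hb
  rcases hb with ⟨h1, h2⟩ | ⟨h1, _⟩
  · -- b ∈ S, b % p ≠ i : find a gap q'' ≤ q of S on runner i, contradiction
    exfalso
    have hm : (runnerSet p i S).card ≤ q / p := by
      by_contra hmm
      exact hqn (Or.inr ⟨hq, by omega⟩)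
    have hgap : ∃ v, v ≤ q / p ∧ i + v * p ∉ S := by
      by_contra hall
      push_neg at hall
      have hsub : (Finset.range (q / p + 1)).image (fun v => i + v * p) ⊆ runnerSet p i S := by
        intro x hx
        obtain ⟨v, hv, rfl⟩ := Finset.mem_image.mp hx
        rw [Finset.mem_range] at hv
        exact Finset.mem_filter.mpr ⟨hall v (by omega), by
          rw [Nat.add_mul_mod_self_right, Nat.mod_eq_of_lt hi]⟩
      have hcard := Finset.card_le_card hsub
      rw [Finset.card_image_of_injOn, Finset.card_range] at hcard
      · omega
      · intro a _ b _ hab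
        simp only at hab
        have h3 : a * p = b * p := by omega
        exact Nat.eq_of_mul_eq_mul_right (by omega) h3
    obtain ⟨v, hv, hvn⟩ := hgap
    have hq'' : i + v * p ≤ q := by
      have hd := Nat.mod_add_div' q p
      have : v * p ≤ q / p * p := Nat.mul_le_mul_right p hv
      omega
    have := hF2 (i + v * p)
      (by rw [Nat.add_mul_mod_self_right, Nat.mod_eq_of_lt hi]) hvn b h2 (by omega)
    exact h1 this
  · exact h1

/-! ### swapping a bead `c` for a gap `d` just below it -/

section Swap

variable {S : Finset ℕ} {c d : ℕ}

lemma swap_card (hd : d < c) (hc : c ∈ S) (hdS : d ∉ S) :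
    (insert d (S.erase c)).card = S.card := by
  rw [Finset.card_insert_of_notMem (by
      simp only [Finset.mem_erase]
      intro h
      exact hdS h.2),
    Finset.card_erase_of_mem hc]
  have : 0 < S.card := Finset.card_pos.mpr ⟨c, hc⟩
  omega

lemma swap_above_ge (hd : d < c) (hc : c ∈ S) {b : ℕ} (hb : c ≤ b) :
    above (insert d (S.erase c)) b = above S b := by
  unfold above
  congr 1
  ext x
  simp only [Finset.mem_filter, Finset.mem_insert, Finset.mem_erase]
  constructor
  · rintro ⟨rfl | ⟨hxc, hxS⟩, hlt⟩
    · omega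
    · exact ⟨hxS, hlt⟩
  · rintro ⟨hxS, hlt⟩
    exact ⟨Or.inr ⟨by omega, hxS⟩, hlt⟩

lemma swap_above_lt (hd : d < c) (hc : c ∈ S) (hdS : d ∉ S) {b : ℕ} (hb : b < d) :
    above (insert d (S.erase c)) b = above S b := by
  unfold above
  have heq : (insert d (S.erase c)).filter (fun x => b < x)
      = insert d ((S.filter (fun x => b < x)).erase c) := by
    ext x
    simp only [Finset.mem_filter, Finset.mem_insert, Finset.mem_erase]
    constructor
    · rintro ⟨rfl | ⟨hxc, hxS⟩, hlt⟩
      · exact Or.inl rfl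
      · exact Or.inr ⟨hxc, hxS, hlt⟩
    · rintro (rfl | ⟨hxc, hxS, hlt⟩)
      · exact ⟨Or.inl rfl, hb⟩
      · exact ⟨Or.inr ⟨hxc, hxS⟩, hlt⟩
  rw [heq, Finset.card_insert_of_notMem (by
      simp only [Finset.mem_erase, Finset.mem_filter]
      intro h
      exact hdS h.2.1),
    Finset.card_erase_of_mem (by
      simp only [Finset.mem_filter]
      exact ⟨hc, by omega⟩)]
  have : 0 < (S.filter (fun x => b < x)).card :=
    Finset.card_pos.mpr ⟨c, by simp only [Finset.mem_filter]; exact ⟨hc, by omega⟩⟩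
  omega

lemma swap_above_d (hd : d < c) (hc : c ∈ S) (hdS : d ∉ S)
    (hbetw : ∀ x ∈ S, x ≤ d ∨ c ≤ x) :
    above (insert d (S.erase c)) d = above S c := by
  unfold above
  congr 1
  ext x
  simp only [Finset.mem_filter, Finset.mem_insert, Finset.mem_erase]
  constructor
  · rintro ⟨rfl | ⟨hxc, hxS⟩, hlt⟩
    · omega
    · rcases hbetw x hxS with h | h
      · omega
      · exact ⟨hxS, by omega⟩
  · rintro ⟨hxS, hlt⟩
    exact ⟨Or.inr ⟨by omega, hxS⟩, by omega⟩

lemma swap_nth_tau (hd : d < c) (hc : c ∈ S) (hdS : d ∉ S)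
    (hbetw : ∀ x ∈ S, x ≤ d ∨ c ≤ x) :
    nthLargest S (above S c) = c ∧
      nthLargest (insert d (S.erase c)) (above S c) = d := by
  constructor
  · exact nthLargest_eq_of hc rfl
  · exact nthLargest_eq_of (Finset.mem_insert_self _ _) (swap_above_d hd hc hdS hbetw)

lemma swap_nth_ne (hd : d < c) (hc : c ∈ S) (hdS : d ∉ S)
    (hbetw : ∀ x ∈ S, x ≤ d ∨ c ≤ x) {t : ℕ} (ht : t < S.card) (hne : t ≠ above S c) :
    nthLargest (insert d (S.erase c)) t = nthLargest S t := by
  set b := nthLargest S t with hb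
  have hbS : b ∈ S := nthLargest_mem ht
  have hab : above S b = t := above_nthLargest ht
  have hbc : b ≠ c := by
    intro h
    rw [h] at hab
    omega
  have hbS' : b ∈ insert d (S.erase c) :=
    Finset.mem_insert.mpr (Or.inr (Finset.mem_erase.mpr ⟨hbc, hbS⟩))
  rcases hbetw b hbS with h | h
  · have hbd : b < d := by
      rcases Nat.eq_or_lt_of_le h with rfl | h2
      · exact absurd hbS hdS
      · exact h2
    exact nthLargest_eq_of hbS' ((swap_above_lt hd hc hdS hbd).trans hab)
  · exact nthLargest_eq_of hbS' ((swap_above_ge hd hc h).trans hab)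

end Swap

/-! ### moving one bead down one step on runner `i` -/

section Move

variable {p i : ℕ} {S : Finset ℕ} {c : ℕ}

lemma mv_mod (hpc : p ≤ c) : (c - p) % p = c % p := by
  have h := Nat.add_mod_right (c - p) p
  rw [show c - p + p = c by omega] at h
  exact h.symm

lemma mv_betw (hp : 0 < p) (hF2 : F2 p i S) (hcm : c % p = i) (hpc : p ≤ c)
    (hgap : c - p ∉ S) : ∀ x ∈ S, x ≤ c - p ∨ c ≤ x := by
  intro x hx
  by_contra h
  push_neg at h
  obtain ⟨h1, h2⟩ := h
  have hxm : x % p = i := hF2 (c - p) (by rw [mv_mod hpc]; exact hcm) hgap x hx h1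
  have hdvd : p ∣ c - x := (Nat.modEq_iff_dvd' (by omega)).mp (by
    show x % p = c % p
    omega)
  have hpos : 0 < c - x := by omega
  have := Nat.le_of_dvd hpos hdvd
  omega

lemma mv_runner' (hi : i < p) (hcm : c % p = i) (hpc : p ≤ c) :
    runnerSet p i (insert (c - p) (S.erase c))
      = insert (c - p) ((runnerSet p i S).erase c) := by
  ext x
  simp only [runnerSet, Finset.mem_filter, Finset.mem_insert, Finset.mem_erase]
  constructor
  · rintro ⟨rfl | ⟨hxc, hxS⟩, hm⟩
    · exact Or.inl rfl
    · exact Or.inr ⟨hxc, hxS, hm⟩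
  · rintro (rfl | ⟨hxc, ⟨hxS, hm⟩⟩)
    · exact ⟨Or.inl rfl, by rw [mv_mod hpc]; exact hcm⟩
    · exact ⟨Or.inr ⟨hxc, hxS⟩, hm⟩

lemma mv_above_runner (hF2 : F2 p i S) (hcm : c % p = i) (hpc : p ≤ c)
    (hgap : c - p ∉ S) : above (runnerSet p i S) c = above S c := by
  unfold above
  congr 1
  ext x
  simp only [runnerSet, Finset.mem_filter]
  constructor
  · rintro ⟨⟨hxS, _⟩, hlt⟩
    exact ⟨hxS, hlt⟩
  · rintro ⟨hxS, hlt⟩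
    exact ⟨⟨hxS, hF2 (c - p) (by rw [mv_mod hpc]; exact hcm) hgap x hxS (by omega)⟩, hlt⟩

lemma mv_F2 (hp : 0 < p) (hF2 : F2 p i S) (hc : c ∈ S) (hcm : c % p = i) (hpc : p ≤ c)
    (hgap : c - p ∉ S) : F2 p i (insert (c - p) (S.erase c)) := by
  intro q hq hqn b hb hqb
  rcases Finset.mem_insert.mp hb with rfl | hb'
  · rw [mv_mod hpc]; exact hcm
  · have hbS : b ∈ S := (Finset.mem_erase.mp hb').2
    have hbc : b ≠ c := (Finset.mem_erase.mp hb').1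
    by_cases hqc : q = c
    · subst hqc
      exact hF2 (q - p) (by rw [mv_mod hpc]; exact hq) hgap b hbS (by omega)
    · have hqS : q ∉ S := by
        intro hqS
        apply hqn
        exact Finset.mem_insert.mpr (Or.inr (Finset.mem_erase.mpr ⟨hqc, hqS⟩))
      exact hF2 q hq hqS b hbS hqb

lemma mv_pushdown (hp : 0 < p) (hi : i < p) (hc : c ∈ S) (hcm : c % p = i) (hpc : p ≤ c)
    (hgap : c - p ∉ S) :
    pushdown p i (insert (c - p) (S.erase c)) = pushdown p i S := by
  have hcard : (runnerSet p i (insert (c - p) (S.erase c))).card = (runnerSet p i S).card := by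
    rw [mv_runner' hi hcm hpc]
    exact swap_card (by omega) (Finset.mem_filter.mpr ⟨hc, hcm⟩)
      (fun h => hgap (Finset.mem_filter.mp h).1)
  unfold pushdown
  rw [hcard]
  congr 1
  ext x
  simp only [Finset.mem_filter, Finset.mem_insert, Finset.mem_erase]
  constructor
  · rintro ⟨rfl | ⟨hxc, hxS⟩, hm⟩
    · exact absurd (by rw [mv_mod hpc]; exact hcm) hm
    · exact ⟨hxS, hm⟩
  · rintro ⟨hxS, hm⟩
    refine ⟨Or.inr ⟨?_, hxS⟩, hm⟩
    rintro rfl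
    exact hm hcm

lemma mv_measure (hp : 0 < p) (hi : i < p) (hc : c ∈ S) (hcm : c % p = i) (hpc : p ≤ c)
    (hgap : c - p ∉ S) :
    (runnerSet p i (insert (c - p) (S.erase c))).sum id + p = (runnerSet p i S).sum id := by
  have hcR : c ∈ runnerSet p i S := Finset.mem_filter.mpr ⟨hc, hcm⟩
  have hdR : c - p ∉ (runnerSet p i S).erase c := by
    simp only [Finset.mem_erase, runnerSet, Finset.mem_filter]
    intro h
    exact hgap h.2.1
  rw [mv_runner' hi hcm hpc, Finset.sum_insert hdR]
  have h2 := Finset.add_sum_erase _ id hcR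
  simp only [id] at *
  omega

end Move

section Move2

variable {p i : ℕ} {S : Finset ℕ} {c : ℕ}

lemma mv_part (hp : 0 < p) (hi : i < p) (hF2 : F2 p i S) (hc : c ∈ S) (hcm : c % p = i)
    (hpc : p ≤ c) (hgap : c - p ∉ S) (t : ℕ) :
    partOfSet S t = partOfSet (insert (c - p) (S.erase c)) t
      + (if t = above S c then p else 0) := by
  set d := c - p with hddef
  set S' := insert d (S.erase c) with hS'
  set τ := above S c with hτ
  have hd : d < c := by omega
  have hdS : d ∉ S := hgap
  have hbetw := mv_betw hp hF2 hcm hpc hgap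
  have hτcard : τ < S.card := above_lt_card hc
  have hcard' : S'.card = S.card := swap_card hd hc hdS
  rcases Nat.lt_or_ge t S.card with ht | ht
  · by_cases htτ : t = τ
    · subst htτ
      rw [if_pos rfl]
      obtain ⟨hn1, hn2⟩ := swap_nth_tau hd hc hdS hbetw
      rw [partOfSet_eq_gapsBelow, partOfSet_eq_gapsBelow, ← hτ] at *
      rw [hn1, hn2]
      -- gapsBelow S c = gapsBelow S' d + p
      have hsplit : Finset.range c = Finset.range d ∪ Finset.Ico d c := by
        rw [Finset.range_eq_Ico, Finset.range_eq_Ico]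
        rw [Finset.Ico_union_Ico_eq_Ico (by omega) (by omega)]
      unfold gapsBelow
      rw [hsplit, Finset.filter_union, Finset.card_union_of_disjoint (by
        apply Finset.disjoint_filter_filter
        simp only [Finset.disjoint_left, Finset.mem_range, Finset.mem_Ico]
        intro a ha
        omega)]
      have hIco : (Finset.Ico d c).filter (fun u => u ∉ S) = Finset.Ico d c := by
        apply Finset.filter_true_of_mem
        intro x hx
        rw [Finset.mem_Ico] at hx
        rcases Nat.eq_or_lt_of_le hx.1 with rfl | hlt
        · exact hdS
        · intro hxS
          rcases hbetw x hxS with h | h <;> omega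
      have hcongr : (Finset.range d).filter (fun u => u ∉ S)
          = (Finset.range d).filter (fun u => u ∉ S') := by
        apply Finset.filter_congr
        intro u hu
        rw [Finset.mem_range] at hu
        simp only [hS', Finset.mem_insert, Finset.mem_erase, eq_iff_iff]
        constructor
        · intro huS h
          rcases h with rfl | ⟨_, h2⟩
          · omega
          · exact huS h2
        · intro h huS
          exact h (Or.inr ⟨by omega, huS⟩)
      rw [hIco, hcongr, Nat.card_Ico]
      omega
    · rw [if_neg htτ]
      have hnth := swap_nth_ne hd hc hdS hbetw ht htτ
      rw [partOfSet_eq_gapsBelow, partOfSet_eq_gapsBelow, hnth, Nat.add_zero]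
      set b := nthLargest S t with hb
      have hbS : b ∈ S := nthLargest_mem ht
      have hbc : b ≠ c := by
        intro h
        apply htτ
        rw [← above_nthLargest ht, ← hb, h, hτ]
      rcases hbetw b hbS with hble | hbge
      · -- b ≤ d
        unfold gapsBelow
        congr 1
        apply Finset.filter_congr
        intro u hu
        rw [Finset.mem_range] at hu
        simp only [hS', Finset.mem_insert, Finset.mem_erase, eq_iff_iff]
        constructor
        · intro h huS
          rcases huS with rfl | ⟨_, h2⟩
          · omega
          · exact h h2
        · intro h huS
          exact h (Or.inr ⟨by omega, huS⟩)
      · -- c ≤ b, in fact c < b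
        have hcb : c < b := by omega
        unfold gapsBelow
        have heq : (Finset.range b).filter (fun u => u ∉ S')
            = insert c (((Finset.range b).filter (fun u => u ∉ S)).erase d) := by
          ext u
          simp only [Finset.mem_insert, Finset.mem_erase, Finset.mem_filter,
            Finset.mem_range, hS']
          constructor
          · rintro ⟨hub, hu⟩
            by_cases huc : u = c
            · exact Or.inl huc
            · right
              refine ⟨?_, hub, ?_⟩
              · rintro rfl
                exact hu (Or.inl rfl)
              · intro huS
                exact hu (Or.inr ⟨huc, huS⟩)
          · rintro (rfl | ⟨hud, hub, huS⟩)
            · refine ⟨hcb, ?_⟩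
              rintro (h1 | h1)
              · omega
              · exact h1.1 rfl
            · refine ⟨hub, ?_⟩
              rintro (h1 | h1)
              · exact hud h1
              · exact huS h1.2
        rw [heq, Finset.card_insert_of_notMem (by
            simp only [Finset.mem_erase, Finset.mem_filter]
            intro h
            exact h.2.2 hc),
          Finset.card_erase_of_mem (by
            simp only [Finset.mem_filter, Finset.mem_range]
            exact ⟨by omega, hdS⟩)]
        have hpos : 0 < ((Finset.range b).filter (fun u => u ∉ S)).card :=
          Finset.card_pos.mpr ⟨d, by
            simp only [Finset.mem_filter, Finset.mem_range]
            exact ⟨by omega, hdS⟩⟩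
        omega
  · have : t ≠ τ := by omega
    rw [if_neg this, partOfSet_of_le ht, partOfSet_of_le (by omega)]

lemma mv_quot (hp : 0 < p) (hi : i < p) (hF2 : F2 p i S) (hc : c ∈ S) (hcm : c % p = i)
    (hpc : p ≤ c) (hgap : c - p ∉ S) (t : ℕ) :
    quotientPart p i S t = quotientPart p i (insert (c - p) (S.erase c)) t
      + (if t = above S c then 1 else 0) := by
  set d := c - p with hddef
  set S' := insert d (S.erase c) with hS'
  set τ := above S c with hτ
  set R := runnerSet p i S with hR
  have hd : d < c := by omega
  have hdS : d ∉ S := hgap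
  have hdm : d % p = i := by rw [hddef, mv_mod hpc]; exact hcm
  have hbetw := mv_betw hp hF2 hcm hpc hgap
  have hcR : c ∈ R := Finset.mem_filter.mpr ⟨hc, hcm⟩
  have hdR : d ∉ R := fun h => hdS (Finset.mem_filter.mp h).1
  have hbetwR : ∀ x ∈ R, x ≤ d ∨ c ≤ x := fun x hx => hbetw x (Finset.mem_filter.mp hx).1
  have hR' : runnerSet p i S' = insert d (R.erase c) := mv_runner' hi hcm hpc
  have hτR : above R c = τ := mv_above_runner hF2 hcm hpc hgap
  have hτcard : τ < R.card := hτR ▸ above_lt_card hcR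
  have hcard' : (runnerSet p i S').card = R.card := by rw [hR']; exact swap_card hd hcR hdR
  have hmemS' : ∀ u, u ≠ d → u ≠ c → (u ∈ S' ↔ u ∈ S) := by
    intro u h1 h2
    simp only [hS', Finset.mem_insert, Finset.mem_erase]
    constructor
    · rintro (rfl | ⟨_, h⟩)
      · omega
      · exact h
    · intro h
      exact Or.inr ⟨h2, h⟩
  rcases Nat.lt_or_ge t R.card with ht | ht
  · by_cases htτ : t = τ
    · subst htτ
      rw [if_pos rfl]
      obtain ⟨hn1, hn2⟩ := swap_nth_tau hd hcR hdR hbetwR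
      rw [hτR] at hn1 hn2
      unfold quotientPart
      rw [← hR, ← hR'] at *
      rw [hn1, hR', hn2]
      have hsplit : Finset.range c = Finset.range d ∪ Finset.Ico d c := by
        rw [Finset.range_eq_Ico, Finset.range_eq_Ico]
        rw [Finset.Ico_union_Ico_eq_Ico (by omega) (by omega)]
      rw [hsplit, Finset.filter_union, Finset.card_union_of_disjoint (by
        apply Finset.disjoint_filter_filter
        simp only [Finset.disjoint_left, Finset.mem_range, Finset.mem_Ico]
        intro a ha
        omega)]
      have hIco : (Finset.Ico d c).filter (fun u => u % p = i ∧ u ∉ S) = {d} := by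
        ext u
        simp only [Finset.mem_Ico, Finset.mem_filter, Finset.mem_singleton]
        constructor
        · rintro ⟨⟨hdu, huc⟩, hum, huS⟩
          by_contra hud
          have hdvd : p ∣ c - u := (Nat.modEq_iff_dvd' (by omega)).mp (by
            show u % p = c % p
            omega)
          have hpos : 0 < c - u := by omega
          have := Nat.le_of_dvd hpos hdvd
          omega
        · rintro rfl
          exact ⟨⟨le_refl _, hd⟩, hdm, hdS⟩
      have hcongr : (Finset.range d).filter (fun u => u % p = i ∧ u ∉ S)
          = (Finset.range d).filter (fun u => u % p = i ∧ u ∉ S') := by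
        apply Finset.filter_congr
        intro u hu
        rw [Finset.mem_range] at hu
        have := hmemS' u (by omega) (by omega)
        constructor
        · rintro ⟨h1, h2⟩
          exact ⟨h1, fun h => h2 (this.mp h)⟩
        · rintro ⟨h1, h2⟩
          exact ⟨h1, fun h => h2 (this.mpr h)⟩
      rw [hIco, hcongr]
      simp
    · rw [if_neg htτ]
      have hnth : nthLargest (runnerSet p i S') t = nthLargest R t := by
        rw [hR']
        exact swap_nth_ne hd hcR hdR hbetwR ht (by rw [hτR]; exact htτ)
      unfold quotientPart
      rw [← hR, ← hR'] at *
      rw [hnth, Nat.add_zero]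
      set b := nthLargest R t with hb
      have hbR : b ∈ R := nthLargest_mem ht
      have hbS : b ∈ S := (Finset.mem_filter.mp hbR).1
      have hbc : b ≠ c := by
        intro h
        apply htτ
        rw [← above_nthLargest ht, ← hb, h, hτR]
      rcases hbetw b hbS with hble | hbge
      · congr 1
        apply Finset.filter_congr
        intro u hu
        rw [Finset.mem_range] at hu
        have := hmemS' u (by omega) (by omega)
        constructor
        · rintro ⟨h1, h2⟩
          exact ⟨h1, fun h => h2 (this.mp h)⟩
        · rintro ⟨h1, h2⟩
          exact ⟨h1, fun h => h2 (this.mpr h)⟩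
      · have hcb : c < b := by omega
        have heq : (Finset.range b).filter (fun u => u % p = i ∧ u ∉ S')
            = insert c (((Finset.range b).filter (fun u => u % p = i ∧ u ∉ S)).erase d) := by
          ext u
          simp only [Finset.mem_insert, Finset.mem_erase, Finset.mem_filter,
            Finset.mem_range]
          constructor
          · rintro ⟨hub, hum, huS'⟩
            by_cases huc : u = c
            · exact Or.inl huc
            · right
              refine ⟨?_, hub, hum, ?_⟩
              · rintro rfl
                exact huS' (Finset.mem_insert_self _ _)
              · intro huS
                exact huS' ((hmemS' u (by rintro rfl; exact hdS huS) huc).mpr huS)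
          · rintro (rfl | ⟨hud, hub, hum, huS⟩)
            · refine ⟨hcb, hcm, ?_⟩
              intro h
              rcases Finset.mem_insert.mp h with h1 | h1
              · omega
              · exact (Finset.mem_erase.mp h1).1 rfl
            · refine ⟨hub, hum, ?_⟩
              intro h
              exact huS ((hmemS' u hud (by rintro rfl; exact huS hc)).mp h)
        rw [heq, Finset.card_insert_of_notMem (by
            simp only [Finset.mem_erase, Finset.mem_filter]
            intro h
            exact h.2.2.2 hc),
          Finset.card_erase_of_mem (by
            simp only [Finset.mem_filter, Finset.mem_range]
            exact ⟨by omega, hdm, hdS⟩)]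
        have hpos : 0 < ((Finset.range b).filter (fun u => u % p = i ∧ u ∉ S)).card :=
          Finset.card_pos.mpr ⟨d, by
            simp only [Finset.mem_filter, Finset.mem_range]
            exact ⟨by omega, hdm, hdS⟩⟩
        omega
  · have : t ≠ τ := by omega
    rw [if_neg this, quotientPart_of_le (by rw [← hR]; omega),
      quotientPart_of_le (by rw [hcard']; omega)]

end Move2

/-! ### main decomposition lemma -/

theorem part_decomp {p i : ℕ} (hp : 0 < p) (hi : i < p) {S : Finset ℕ} (hF2 : F2 p i S) :
    ∀ t, partOfSet S t = partOfSet (pushdown p i S) t + p * quotientPart p i S t := by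
  generalize hμ : (runnerSet p i S).sum id = n
  induction n using Nat.strong_induction_on generalizing S with
  | _ n ih =>
    by_cases hdc : DC p i S
    · rw [pushdown_eq_of_dc hp hi hdc]
      intro t
      have hq : quotientPart p i S t = 0 := by
        rcases Nat.lt_or_ge t (runnerSet p i S).card with ht | ht
        · unfold quotientPart
          rw [Finset.card_eq_zero, Finset.filter_eq_empty_iff]
          rintro u hu ⟨hum, huS⟩
          rw [Finset.mem_range] at hu
          have hct := nthLargest_mem ht
          have hctS : nthLargest (runnerSet p i S) t ∈ S := (Finset.mem_filter.mp hct).1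
          have hctm : nthLargest (runnerSet p i S) t % p = i := (Finset.mem_filter.mp hct).2
          exact huS (dc_le_mem hp hdc hum hctS hctm (by omega))
        · exact quotientPart_of_le ht
      rw [hq]
      omega
    · unfold DC at hdc
      push_neg at hdc
      obtain ⟨c, hc, hcm, hpc, hgap⟩ := hdc
      have hF2' := mv_F2 hp hF2 hc hcm hpc hgap
      have hmeas := mv_measure hp hi hc hcm hpc hgap
      have hrec := ih ((runnerSet p i (insert (c - p) (S.erase c))).sum id)
        (by omega) hF2' rfl
      intro t
      rw [mv_part hp hi hF2 hc hcm hpc hgap t, mv_quot hp hi hF2 hc hcm hpc hgap t,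
        hrec t, mv_pushdown hp hi hc hcm hpc hgap]
      set a := quotientPart p i (insert (c - p) (S.erase c)) t
      by_cases htτ : t = above S c
      · rw [if_pos htτ, if_pos htτ]
        have : p * (a + 1) = p * a + p := by ring
        omega
      · rw [if_neg htτ, if_neg htτ]
        simp only [Nat.add_zero]

/-! ### restrictedness of the bottom-justified partition -/

theorem restricted_of_dc {p i : ℕ} (hp : 0 < p) (hi : i < p) {S : Finset ℕ}
    (hF2 : F2 p i S) (hdc : DC p i S) : IsPRestricted p (partOfSet S) := by
  refine ⟨⟨partOfSet_antitone S, ⟨S.card, fun t ht => partOfSet_of_le ht⟩⟩, ?_⟩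
  intro t
  rcases Nat.lt_or_ge t S.card with ht | ht
  · rcases Nat.lt_or_ge (t+1) S.card with ht1 | ht1
    · -- main case
      set b := nthLargest S t with hbdef
      set b' := nthLargest S (t+1) with hb'def
      have hbb' : b' < b := nthLargest_lt (Nat.lt_succ_self t) ht1
      have hbS : b ∈ S := nthLargest_mem ht
      have hb'S : b' ∈ S := nthLargest_mem ht1
      have hbp : b ≤ b' + p := by
        by_contra hgt
        push_neg at hgt
        set m := (b - p) % p with hm
        have hmlt : m < p := Nat.mod_lt _ (by omega)
        set r := (i + p - m) % p with hr
        have hrlt : r < p := Nat.mod_lt _ (by omega)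
        set u := (b - p) + r with hu
        have hum : u % p = i := by
          have h2 : u % p = (m + r) % p := by
            rw [hu, Nat.add_mod, ← hm, Nat.mod_eq_of_lt hrlt]
          have h3 : (m + r) % p = (i + p) % p := by
            have hcc : m + (i + p - m) = i + p := by omega
            calc (m + r) % p = (m % p + (i + p - m) % p) % p := by
                  rw [hr, Nat.mod_eq_of_lt hmlt]
              _ = (m + (i + p - m)) % p := (Nat.add_mod _ _ _).symm
              _ = (i + p) % p := by rw [hcc]
          rw [h2, h3, Nat.add_mod_right, Nat.mod_eq_of_lt hi]
        have hub : b' < u ∧ u < b := by omega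
        have huS : u ∉ S := fun h => no_mem_between ht1 h hub.1 hub.2
        have hbm : b % p = i := hF2 u hum huS b hbS hub.2
        exact huS (dc_le_mem hp hdc hum hbS hbm (by omega))
      -- count gaps in [b', b)
      have hsplit : Finset.range b = Finset.range b' ∪ Finset.Ico b' b := by
        rw [Finset.range_eq_Ico, Finset.range_eq_Ico]
        rw [Finset.Ico_union_Ico_eq_Ico (by omega) (by omega)]
      have hcount : partOfSet S t ≤ partOfSet S (t+1) + (b - b' - 1) := by
        rw [partOfSet_eq_gapsBelow, partOfSet_eq_gapsBelow, ← hbdef, ← hb'def]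
        unfold gapsBelow
        rw [hsplit, Finset.filter_union, Finset.card_union_of_disjoint (by
          apply Finset.disjoint_filter_filter
          simp only [Finset.disjoint_left, Finset.mem_range, Finset.mem_Ico]
          intro a ha
          omega)]
        have hle : ((Finset.Ico b' b).filter (fun u => u ∉ S)).card ≤ b - b' - 1 := by
          have hsub : (Finset.Ico b' b).filter (fun u => u ∉ S) ⊆ (Finset.Ico b' b).erase b' := by
            intro x hx
            simp only [Finset.mem_filter, Finset.mem_Ico, Finset.mem_erase] at *
            refine ⟨?_, hx.1⟩
            rintro rfl
            exact hx.2 hb'S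
          have := Finset.card_le_card hsub
          rw [Finset.card_erase_of_mem (Finset.mem_Ico.mpr ⟨le_refl _, by omega⟩),
            Nat.card_Ico] at this
          omega
        omega
      omega
    · -- t+1 ≥ card, t < card : last part
      have hz : partOfSet S (t+1) = 0 := partOfSet_of_le ht1
      set b := nthLargest S t with hbdef
      have hbS : b ∈ S := nthLargest_mem ht
      have htc : t = S.card - 1 := by omega
      -- all u < b are gaps
      have hbmin : ∀ u, u < b → u ∉ S := by
        intro u hub huS
        have h1 : above S u < S.card := above_lt_card huS
        have h2 : above S b = t := above_nthLargest ht
        have hsub : insert b (S.filter (fun y => b < y)) ⊆ S.filter (fun y => u < y) := by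
          intro y hy
          rcases Finset.mem_insert.mp hy with rfl | hy'
          · exact Finset.mem_filter.mpr ⟨hbS, hub⟩
          · simp only [Finset.mem_filter] at *
            exact ⟨hy'.1, by omega⟩
        have := Finset.card_le_card hsub
        rw [Finset.card_insert_of_notMem (by simp)] at this
        unfold above at *
        omega
      have hpart : partOfSet S t = b := by
        rw [partOfSet_eq_gapsBelow, ← hbdef]
        unfold gapsBelow
        rw [Finset.filter_true_of_mem (fun x hx => hbmin x (Finset.mem_range.mp hx)),
          Finset.card_range]
      have hblt : b ≤ p - 1 := by
        by_contra hbig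
        push_neg at hbig
        have hiS : i ∉ S := hbmin i (by omega)
        have hbm : b % p = i := hF2 i (Nat.mod_eq_of_lt hi) hiS b hbS (by omega)
        have := hdc b hbS hbm (by omega)
        exact hbmin (b - p) (by omega) this
      omega
  · rw [partOfSet_of_le ht]
    omega

/-! ### uniqueness of restricted decompositions -/

theorem restricted_unique {p : ℕ} (hp : 2 ≤ p) {a a' g g' : ℕ → ℕ}
    (ha : IsPRestricted p a) (ha' : IsPRestricted p a')
    (h : ∀ t, a t + p * g t = a' t + p * g' t) : ∀ t, a t = a' t := by
  obtain ⟨⟨haa, Na, hNa⟩, hra⟩ := ha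
  obtain ⟨⟨haa', Na', hNa'⟩, hra'⟩ := ha'
  have hdvd : ∀ t, ((a t : ℤ) - a' t) = p * ((g' t : ℤ) - g t) := by
    intro t
    have hcast : (a t : ℤ) + p * g t = a' t + p * g' t := by exact_mod_cast h t
    linear_combination hcast
  have hconst : ∀ t, (a t : ℤ) - a' t = (a 0 : ℤ) - a' 0 := by
    intro t
    induction t with
    | zero => rfl
    | succ n ihn =>
      have hb1 : a (n+1) ≤ a n := haa (by omega)
      have hb2 : a n - a (n+1) ≤ p - 1 := hra n
      have hb1' : a' (n+1) ≤ a' n := haa' (by omega)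
      have hb2' : a' n - a' (n+1) ≤ p - 1 := hra' n
      have hKeq : ((a n : ℤ) - a' n) - ((a (n+1) : ℤ) - a' (n+1))
          = p * (((g' n : ℤ) - g n) - ((g' (n+1) : ℤ) - g (n+1))) := by
        rw [hdvd n, hdvd (n+1)]
        ring
      set K := ((g' n : ℤ) - g n) - ((g' (n+1) : ℤ) - g (n+1)) with hK
      have hK0 : K = 0 := by
        by_contra hne
        rcases lt_or_gt_of_ne hne with hneg | hpos
        · have : (p : ℤ) * K ≤ p * (-1) := by
            apply mul_le_mul_of_nonneg_left (by omega) (by positivity)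
          omega
        · have : (p : ℤ) * 1 ≤ p * K := by
            apply mul_le_mul_of_nonneg_left (by omega) (by positivity)
          omega
      rw [hK0, mul_zero] at hKeq
      omega
  have hz : a (Na + Na') = 0 := hNa _ (by omega)
  have hz' : a' (Na + Na') = 0 := hNa' _ (by omega)
  intro t
  have h1 := hconst t
  have h2 := hconst (Na + Na')
  omega

lemma expansion_split {p : ℕ} {f : ℕ → ℕ} {c : ℕ → ℕ → ℕ} (hc : IsPAdicExpansion p f c) :
    ∃ g : ℕ → ℕ, ∀ t, f t = c 0 t + p * g t := by
  obtain ⟨hres, N, hvan, hsum⟩ := hc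
  cases N with
  | zero =>
    refine ⟨fun _ => 0, fun t => ?_⟩
    rw [hsum t, hvan 0 t (le_refl 0)]
    simp
  | succ M =>
    refine ⟨fun t => ∑ k ∈ Finset.range M, p ^ k * c (k+1) t, fun t => ?_⟩
    rw [hsum t, Finset.sum_range_succ']
    rw [pow_zero, one_mul, Finset.mul_sum]
    have hterm : ∀ x ∈ Finset.range M, p ^ (x+1) * c (x+1) t = p * (p ^ x * c (x+1) t) := by
      intro x _
      ring
    rw [Finset.sum_congr rfl hterm]
    omega

/-! ### complement-reversal and conjugation -/

/-- complement of `S` within `range L`, reversed. -/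
def compRev (L : ℕ) (S : Finset ℕ) : Finset ℕ :=
  ((Finset.range L) \ S).image (fun u => L - 1 - u)

lemma mem_compRev {L : ℕ} {S : Finset ℕ} {x : ℕ} :
    x ∈ compRev L S ↔ x < L ∧ (L - 1 - x) ∉ S := by
  unfold compRev
  rw [Finset.mem_image]
  constructor
  · rintro ⟨u, hu, rfl⟩
    rw [Finset.mem_sdiff, Finset.mem_range] at hu
    refine ⟨by omega, ?_⟩
    rw [show L - 1 - (L - 1 - u) = u by omega]
    exact hu.2
  · rintro ⟨hx, hnot⟩
    exact ⟨L - 1 - x, Finset.mem_sdiff.mpr ⟨Finset.mem_range.mpr (by omega), hnot⟩, by omega⟩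

lemma card_compRev {L : ℕ} {S : Finset ℕ} (hS : ∀ b ∈ S, b < L) :
    (compRev L S).card + S.card = L := by
  unfold compRev
  rw [Finset.card_image_of_injOn (by
    intro a ha b hb hab
    rw [Finset.mem_coe, Finset.mem_sdiff, Finset.mem_range] at ha hb
    simp only at hab
    omega)]
  rw [Finset.card_sdiff_of_subset (fun b hb => Finset.mem_range.mpr (hS b hb)), Finset.card_range]
  have : S.card ≤ L := by
    have := Finset.card_le_card (fun b hb => Finset.mem_range.mpr (hS b hb))
    rwa [Finset.card_range] at this
  omega

lemma conjugate_eq_card_filter {g : ℕ → ℕ} {N : ℕ} (hN : ∀ t, N ≤ t → g t = 0) (v : ℕ) :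
    conjugate g v = ((Finset.range N).filter (fun t => v < g t)).card := by
  unfold conjugate
  have hset : {t : ℕ | v < g t} = ↑((Finset.range N).filter (fun t => v < g t)) := by
    ext t
    simp only [Set.mem_setOf_eq, Finset.coe_filter, Finset.mem_range, Set.mem_setOf_eq]
    constructor
    · intro h
      refine ⟨?_, h⟩
      by_contra hc
      rw [hN t (by omega)] at h
      omega
    · exact fun h => h.2
  rw [hset, Nat.card_coe_set_eq, Set.ncard_coe_finset]

lemma conjugate_congr {g g' : ℕ → ℕ} (h : ∀ t, g t = g' t) (v : ℕ) :
    conjugate g v = conjugate g' v := by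
  unfold conjugate
  rw [show {i : ℕ | v < g i} = {i : ℕ | v < g' i} from by
    ext t
    simp [h t]]

lemma gapsBelow_eq_G {L : ℕ} {S : Finset ℕ} {b : ℕ} (hb : b ≤ L) :
    gapsBelow S b = ((Finset.range L \ S).filter (fun u => u < b)).card := by
  unfold gapsBelow
  congr 1
  ext u
  simp only [Finset.mem_filter, Finset.mem_range, Finset.mem_sdiff]
  constructor
  · rintro ⟨h1, h2⟩
    exact ⟨⟨by omega, h2⟩, h1⟩
  · rintro ⟨⟨_, h2⟩, h3⟩
    exact ⟨h3, h2⟩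

theorem partOfSet_compRev {L : ℕ} {S : Finset ℕ} (hS : ∀ b ∈ S, b < L) (v : ℕ) :
    partOfSet (compRev L S) v = conjugate (partOfSet S) v := by
  rw [conjugate_eq_card_filter (fun t ht => partOfSet_of_le ht) v]
  have hcardC : (compRev L S).card + S.card = L := card_compRev hS
  -- Step A : reindex the right-hand side by the beads themselves
  have hA : ((Finset.range S.card).filter (fun t => v < partOfSet S t)).card
      = (S.filter (fun b => v < gapsBelow S b)).card := by
    apply Finset.card_bij (fun t _ => nthLargest S t)
    · intro t ht
      simp only [Finset.mem_filter, Finset.mem_range] at *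
      exact ⟨nthLargest_mem ht.1, by rw [← partOfSet_eq_gapsBelow]; exact ht.2⟩
    · intro t ht t' ht' heq
      simp only [Finset.mem_filter, Finset.mem_range] at ht ht'
      rw [← above_nthLargest ht.1, ← above_nthLargest ht'.1, heq]
    · intro b hb
      simp only [Finset.mem_filter] at hb
      refine ⟨above S b, ?_, ?_⟩
      · simp only [Finset.mem_filter, Finset.mem_range]
        refine ⟨above_lt_card hb.1, ?_⟩
        rw [partOfSet_eq_gapsBelow, nthLargest_eq_of hb.1 rfl]
        exact hb.2
      · exact nthLargest_eq_of hb.1 rfl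
  rw [hA]
  rcases Nat.lt_or_ge v (compRev L S).card with hv | hv
  · -- main case
    set G := Finset.range L \ S with hG
    have hGcard : G.card = (compRev L S).card := by
      rw [hG, Finset.card_sdiff_of_subset (fun b hb => Finset.mem_range.mpr (hS b hb)), Finset.card_range]
      omega
    have hw : G.card - 1 - v < G.card := by omega
    set γ := nthLargest G (G.card - 1 - v) with hγ
    have hγG : γ ∈ G := nthLargest_mem hw
    have hγab : above G γ = G.card - 1 - v := above_nthLargest hw
    have hγL : γ < L := by
      rw [hG, Finset.mem_sdiff, Finset.mem_range] at hγG
      exact hγG.1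
    have hγS : γ ∉ S := by
      rw [hG, Finset.mem_sdiff] at hγG
      exact hγG.2
    have hbelow : (G.filter (fun u => u < γ)).card = v := by
      have := card_split hγG
      omega
    -- claim 1
    have hclaim1 : nthLargest (compRev L S) v = L - 1 - γ := by
      apply nthLargest_eq_of
      · rw [mem_compRev]
        refine ⟨by omega, ?_⟩
        rw [show L - 1 - (L - 1 - γ) = γ by omega]
        exact hγS
      · unfold above
        have himg : (compRev L S).filter (fun x => L - 1 - γ < x)
            = (G.filter (fun u => u < γ)).image (fun u => L - 1 - u) := by
          ext x
          simp only [Finset.mem_filter, Finset.mem_image, mem_compRev]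
          constructor
          · rintro ⟨⟨hxL, hxS⟩, hgt⟩
            refine ⟨L - 1 - x, ?_, by omega⟩
            simp only [Finset.mem_filter, hG, Finset.mem_sdiff, Finset.mem_range]
            exact ⟨⟨by omega, hxS⟩, by omega⟩
          · rintro ⟨u, hu, rfl⟩
            simp only [Finset.mem_filter, hG, Finset.mem_sdiff, Finset.mem_range] at hu
            refine ⟨⟨by omega, ?_⟩, by omega⟩
            rw [show L - 1 - (L - 1 - u) = u by omega]
            exact hu.1.2
        rw [himg, Finset.card_image_of_injOn (by
          intro a ha b hb hab
          simp only [Finset.mem_coe, Finset.mem_filter, hG, Finset.mem_sdiff,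
            Finset.mem_range] at ha hb
          simp only at hab
          omega)]
        exact hbelow
    -- claim 2
    have hclaim2 : partOfSet (compRev L S) v = (S.filter (fun b => γ < b)).card := by
      rw [partOfSet_eq_gapsBelow, hclaim1]
      unfold gapsBelow
      apply Finset.card_bij (fun u _ => L - 1 - u)
      · intro u hu
        simp only [Finset.mem_filter, Finset.mem_range, mem_compRev] at *
        have huL : u < L := by omega
        have : L - 1 - u ∈ S := by
          by_contra hc
          exact hu.2 ⟨huL, hc⟩
        exact ⟨this, by omega⟩
      · intro u hu u' hu' heq
        simp only [Finset.mem_filter, Finset.mem_range] at hu hu'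
        omega
      · intro b hb
        simp only [Finset.mem_filter] at hb
        have hbL : b < L := hS b hb.1
        refine ⟨L - 1 - b, ?_, by omega⟩
        simp only [Finset.mem_filter, Finset.mem_range, mem_compRev]
        refine ⟨by omega, ?_⟩
        rintro ⟨_, hnot⟩
        rw [show L - 1 - (L - 1 - b) = b by omega] at hnot
        exact hnot hb.1
    -- claim 3
    have hclaim3 : S.filter (fun b => v < gapsBelow S b) = S.filter (fun b => γ < b) := by
      apply Finset.filter_congr
      intro b hbS
      have hbL : b < L := hS b hbS
      rw [gapsBelow_eq_G (by omega : b ≤ L), ← hG]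
      constructor
      · intro hlt
        by_contra hle
        have hsub : G.filter (fun u => u < b) ⊆ G.filter (fun u => u < γ) := by
          intro x hx
          simp only [Finset.mem_filter] at *
          have : b ≠ γ := fun h => hγS (h ▸ hbS)
          exact ⟨hx.1, by omega⟩
        have := Finset.card_le_card hsub
        omega
      · intro hlt
        have hsub : insert γ (G.filter (fun u => u < γ)) ⊆ G.filter (fun u => u < b) := by
          intro x hx
          rcases Finset.mem_insert.mp hx with rfl | hx'
          · exact Finset.mem_filter.mpr ⟨hγG, hlt⟩
          · simp only [Finset.mem_filter] at *
            exact ⟨hx'.1, by omega⟩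
        have := Finset.card_le_card hsub
        rw [Finset.card_insert_of_notMem (by simp)] at this
        omega
    rw [hclaim2, hclaim3]
  · -- degenerate case : both sides vanish
    rw [partOfSet_of_le hv]
    have : S.filter (fun b => v < gapsBelow S b) = ∅ := by
      rw [Finset.filter_eq_empty_iff]
      intro b hb
      have hbL : b < L := hS b hb
      have : gapsBelow S b ≤ (compRev L S).card := by
        rw [gapsBelow_eq_G (by omega : b ≤ L)]
        have hsub := Finset.filter_subset (fun u => u < b) (Finset.range L \ S)
        have h1 := Finset.card_le_card hsub
        have h2 : (Finset.range L \ S).card = (compRev L S).card := by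
          rw [Finset.card_sdiff_of_subset (fun x hx => Finset.mem_range.mpr (hS x hx)),
            Finset.card_range]
          omega
        omega
      omega
    rw [this]
    simp

/-! ### arithmetic of reversal -/

lemma rev_decomp {p M x : ℕ} (hp : 0 < p) (hx : x < p * M) :
    p * M - 1 - x = (p - 1 - x % p) + (M - x / p - 1) * p ∧ x / p < M := by
  have hr : x % p < p := Nat.mod_lt _ hp
  have hd : x % p + x / p * p = x := Nat.mod_add_div' x p
  have hpm : p * M = M * p := Nat.mul_comm p M
  have hdM : x / p < M := by
    rw [Nat.div_lt_iff_lt_mul hp]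
    omega
  have hsum : (M - x/p - 1) + (x/p) + 1 = M := by omega
  have hmul : ((M - x/p - 1) + (x/p) + 1) * p = M * p := by rw [hsum]
  rw [Nat.add_mul, Nat.add_mul, one_mul] at hmul
  exact ⟨by omega, hdM⟩

lemma rev_mod_div {p M x : ℕ} (hp : 0 < p) (hx : x < p * M) :
    (p * M - 1 - x) % p = p - 1 - x % p ∧ (p * M - 1 - x) / p = M - x / p - 1 := by
  obtain ⟨he, hdM⟩ := rev_decomp hp hx
  have hr : x % p < p := Nat.mod_lt _ hp
  constructor
  · rw [he, Nat.add_mul_mod_self_right, Nat.mod_eq_of_lt (by omega)]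
  · rw [he, Nat.add_mul_div_right _ _ hp, Nat.div_eq_of_lt (by omega)]
    omega

lemma pos_lt_of_div {p M x : ℕ} (hp : 0 < p) (hm : x % p < p) (hdiv : x / p < M) :
    x < p * M := by
  have hd : x % p + x / p * p = x := Nat.mod_add_div' x p
  have hpm : p * M = M * p := Nat.mul_comm p M
  have h1 : x / p + 1 ≤ M := hdiv
  have h2 : (x / p + 1) * p ≤ M * p := Nat.mul_le_mul_right p h1
  rw [Nat.add_mul, one_mul] at h2
  omega

/-! ### F3 dualizes to F2 -/

theorem F3_to_F2 {p M j : ℕ} (hp : 0 < p) (hj : j < p) {B : Finset ℕ}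
    (hB : ∀ b ∈ B, b < p * M) (h3 : F3 p j B) :
    F2 p (p - 1 - j) (compRev (p * M) B) := by
  intro q hq hqn b hb hqb
  rw [mem_compRev] at hb
  obtain ⟨hbL, hbB⟩ := hb
  have hqL : q < p * M := by omega
  have hqd : p * M - 1 - q ∈ B := by
    by_contra hc
    exact hqn (mem_compRev.mpr ⟨hqL, hc⟩)
  have hqmod := (rev_mod_div hp hqL).1
  have hdm : (p * M - 1 - q) % p = j := by
    have : q % p < p := Nat.mod_lt _ hp
    omega
  by_contra hbm
  have hbmod := (rev_mod_div hp hbL).1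
  have hum : (p * M - 1 - b) % p ≠ j := by
    have h1 : b % p < p := Nat.mod_lt _ hp
    omega
  have := h3 _ hqd hdm (p * M - 1 - b) (by omega) hum
  exact hbB this

/-! ### runner index sets dualize -/

lemma ridx_subset_range {p M j : ℕ} (hp : 0 < p) (hj : j < p) {B : Finset ℕ}
    (hB : ∀ b ∈ B, b < p * M) : ∀ v ∈ ridx p j B, v < M := by
  intro v hv
  rw [mem_ridx hj] at hv
  have hlt := hB _ hv
  have hpm : p * M = M * p := Nat.mul_comm p M
  by_contra hge
  have : M * p ≤ v * p := Nat.mul_le_mul_right p (by omega)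
  omega

lemma ridx_compRev {p M j : ℕ} (hp : 0 < p) (hj : j < p) {B : Finset ℕ}
    (hB : ∀ b ∈ B, b < p * M) :
    ridx p (p - 1 - j) (compRev (p * M) B) = compRev M (ridx p j B) := by
  have hj' : p - 1 - j < p := by omega
  ext v
  rw [mem_ridx hj', mem_compRev, mem_compRev, mem_ridx hj]
  constructor
  · rintro ⟨h1, h2⟩
    have hvM : v < M := by
      by_contra hge
      have hpm : p * M = M * p := Nat.mul_comm p M
      have : M * p ≤ v * p := Nat.mul_le_mul_right p (by omega)
      omega
    refine ⟨hvM, ?_⟩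
    have hsum : (M - 1 - v) + v + 1 = M := by omega
    have hmul : ((M - 1 - v) + v + 1) * p = M * p := by rw [hsum]
    rw [Nat.add_mul, Nat.add_mul, one_mul] at hmul
    have hpm : p * M = M * p := Nat.mul_comm p M
    have heq : p * M - 1 - (p - 1 - j + v * p) = j + (M - 1 - v) * p := by omega
    rwa [heq] at h2
  · rintro ⟨hvM, hnot⟩
    have hsum : (M - 1 - v) + v + 1 = M := by omega
    have hmul : ((M - 1 - v) + v + 1) * p = M * p := by rw [hsum]
    rw [Nat.add_mul, Nat.add_mul, one_mul] at hmul
    have hpm : p * M = M * p := Nat.mul_comm p M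
    refine ⟨by omega, ?_⟩
    have heq : p * M - 1 - (p - 1 - j + v * p) = j + (M - 1 - v) * p := by omega
    rwa [heq]

lemma card_runner_compRev {p M j : ℕ} (hp : 0 < p) (hj : j < p) {B : Finset ℕ}
    (hB : ∀ b ∈ B, b < p * M) :
    (runnerSet p (p - 1 - j) (compRev (p * M) B)).card + (runnerSet p j B).card = M := by
  rw [← ridx_card, ← ridx_card, ridx_compRev hp hj hB]
  exact card_compRev (ridx_subset_range hp hj hB)

/-! ### compRev of the pushed-down dual -/

lemma pushdown_subset {p M j : ℕ} (hp : 0 < p) (hj : j < p) {B : Finset ℕ}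
    (hB : ∀ b ∈ B, b < p * M) : ∀ b ∈ pushdown p j B, b < p * M := by
  intro b hb
  rw [mem_pushdown hj] at hb
  rcases hb with ⟨_, hbB⟩ | ⟨hbm, hbd⟩
  · exact hB b hbB
  · have hcard : (runnerSet p j B).card ≤ M := by
      rw [← ridx_card]
      have hsub : ridx p j B ⊆ Finset.range M :=
        fun v hv => Finset.mem_range.mpr (ridx_subset_range hp hj hB v hv)
      have := Finset.card_le_card hsub
      rwa [Finset.card_range] at this
    exact pos_lt_of_div hp (Nat.mod_lt _ hp) (by omega)

lemma compRev_pushdown {p M j : ℕ} (hp : 0 < p) (hj : j < p) {B : Finset ℕ}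
    (hB : ∀ b ∈ B, b < p * M) :
    compRev (p * M) (pushdown p (p - 1 - j) (compRev (p * M) B)) = pushdown p j B := by
  have hj' : p - 1 - j < p := by omega
  have hcards := card_runner_compRev hp hj hB
  have hmj : (runnerSet p j B).card ≤ M := by omega
  ext x
  rw [mem_compRev, mem_pushdown hj]
  constructor
  · rintro ⟨hxL, hxT⟩
    rw [mem_pushdown hj'] at hxT
    push_neg at hxT
    obtain ⟨hmod, hdiv⟩ := rev_mod_div hp hxL
    have hxr : x % p < p := Nat.mod_lt _ hp
    by_cases hxj : x % p = j
    · right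
      refine ⟨hxj, ?_⟩
      have h2 := hxT.2 (by omega)
      have hxdM : x / p < M := (rev_decomp hp hxL).2
      omega
    · left
      refine ⟨hxj, ?_⟩
      have h1 := hxT.1
      by_contra hxB
      apply h1 (by omega)
      rw [mem_compRev]
      refine ⟨by omega, ?_⟩
      rw [show p * M - 1 - (p * M - 1 - x) = x by omega]
      exact hxB
  · intro hx
    have hxL : x < p * M := by
      rcases hx with ⟨_, hxB⟩ | ⟨hxm, hxd⟩
      · exact hB x hxB
      · exact pos_lt_of_div hp (Nat.mod_lt _ hp) (by omega)
    obtain ⟨hmod, hdiv⟩ := rev_mod_div hp hxL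
    have hxr : x % p < p := Nat.mod_lt _ hp
    have hxdM : x / p < M := (rev_decomp hp hxL).2
    refine ⟨hxL, ?_⟩
    rw [mem_pushdown hj']
    rcases hx with ⟨hxj, hxB⟩ | ⟨hxj, hxd⟩
    · rintro (⟨_, hmem⟩ | ⟨hm2, _⟩)
      · rw [mem_compRev] at hmem
        rw [show p * M - 1 - (p * M - 1 - x) = x by omega] at hmem
        exact hmem.2 hxB
      · omega
    · rintro (⟨hm1, _⟩ | ⟨_, hd2⟩)
      · omega
      · omega

/-! ### pushUp and F1 -/

lemma mem_pushUp {p : ℕ} (hp : 0 < p) {B : Finset ℕ} {x : ℕ} :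
    x ∈ pushUp p B ↔ x / p < (runnerSet p (x % p) B).card := by
  unfold pushUp
  rw [Finset.mem_biUnion]
  constructor
  · rintro ⟨k, hk, hx⟩
    rw [Finset.mem_range] at hk
    obtain ⟨t, ht, rfl⟩ := Finset.mem_image.mp hx
    rw [Finset.mem_range] at ht
    rw [Nat.add_mul_mod_self_right, Nat.mod_eq_of_lt hk,
      Nat.add_mul_div_right _ _ hp, Nat.div_eq_of_lt hk]
    omega
  · intro h
    refine ⟨x % p, Finset.mem_range.mpr (Nat.mod_lt _ hp),
      Finset.mem_image.mpr ⟨x / p, Finset.mem_range.mpr h, Nat.mod_add_div' x p⟩⟩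

lemma F1_dc {p i j : ℕ} {B : Finset ℕ} (h1 : F1 p i j B) :
    ∀ k, k < p → k ≠ i → k ≠ j → DC p k B := by
  intro k hk hki hkj x hx hxm hpx
  apply h1 k hk hki hkj x hx hxm (x - p) (by omega)
  rw [mv_mod hpx]
  exact hxm

lemma mem_iff_div_lt {p k : ℕ} (hp : 0 < p) (hk : k < p) {B : Finset ℕ}
    (hdc : DC p k B) {x : ℕ} (hx : x % p = k) :
    x ∈ B ↔ x / p < (runnerSet p k B).card := by
  have hridx := range_of_step (dc_ridx_step hp hk hdc)
  have hmem : x ∈ B ↔ x / p ∈ ridx p k B := by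
    rw [mem_ridx hk]
    have hd := Nat.mod_add_div' x p
    rw [show k + x / p * p = x by omega]
  rw [hmem, hridx, ridx_card, Finset.mem_range]

lemma runnerSet_pushdown_ne {p i j : ℕ} (hj : j < p) (hij : i ≠ j) (B : Finset ℕ) :
    runnerSet p i (pushdown p j B) = runnerSet p i B := by
  ext x
  unfold runnerSet
  rw [Finset.mem_filter, Finset.mem_filter, mem_pushdown hj]
  constructor
  · rintro ⟨h | h, hm⟩
    · exact ⟨h.2, hm⟩
    · exact absurd h.1 (by rw [hm]; omega)
  · rintro ⟨hx, hm⟩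
    exact ⟨Or.inl ⟨by rw [hm]; omega, hx⟩, hm⟩

lemma quot_pushdown_ne {p i j : ℕ} (hj : j < p) (hij : i ≠ j) (B : Finset ℕ) (t : ℕ) :
    quotientPart p i (pushdown p j B) t = quotientPart p i B t := by
  unfold quotientPart
  rw [runnerSet_pushdown_ne hj hij]
  congr 1
  apply Finset.filter_congr
  intro u _
  constructor
  · rintro ⟨hm, hn⟩
    refine ⟨hm, fun hB => hn ((mem_pushdown hj).mpr (Or.inl ⟨by rw [hm]; omega, hB⟩))⟩
  · rintro ⟨hm, hn⟩
    refine ⟨hm, fun hC => ?_⟩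
    rw [mem_pushdown hj] at hC
    rcases hC with ⟨_, hB⟩ | ⟨hj', _⟩
    · exact hn hB
    · rw [hm] at hj'
      omega

lemma F2_pushdown_ne {p i j : ℕ} (hp : 0 < p) (hj : j < p) (hij : i ≠ j) {B : Finset ℕ}
    (hF2 : F2 p i B) : F2 p i (pushdown p j B) := by
  intro q hq hqn b hb hqb
  have hqB : q ∉ B := fun h =>
    hqn ((mem_pushdown hj).mpr (Or.inl ⟨by rw [hq]; omega, h⟩))
  rw [mem_pushdown hj] at hb
  rcases hb with ⟨hbj, hbB⟩ | ⟨hbj, hbd⟩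
  · exact hF2 q hq hqB b hbB hqb
  · exfalso
    have hex : ∃ v ∈ ridx p j B, b / p ≤ v := by
      by_contra hall
      push_neg at hall
      have hsub : ridx p j B ⊆ Finset.range (b / p) := by
        intro v hv
        exact Finset.mem_range.mpr (hall v hv)
      have := Finset.card_le_card hsub
      rw [Finset.card_range, ridx_card] at this
      omega
    obtain ⟨v, hv, hle⟩ := hex
    have hb' : j + v * p ∈ B := (mem_ridx hj).mp hv
    have hble : b ≤ j + v * p := by
      have hd := Nat.mod_add_div' b p
      have : b / p * p ≤ v * p := Nat.mul_le_mul_right p hle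
      omega
    have hres := hF2 q hq hqB _ hb' (by omega)
    rw [Nat.add_mul_mod_self_right, Nat.mod_eq_of_lt hj] at hres
    exact hij hres.symm

lemma pushdown_pushdown_eq_pushUp {p i j : ℕ} (hp : 0 < p) (hi : i < p) (hj : j < p)
    (hij : i ≠ j) {B : Finset ℕ} (h1 : F1 p i j B) :
    pushdown p i (pushdown p j B) = pushUp p B := by
  ext x
  rw [mem_pushdown hi, mem_pushUp hp, runnerSet_pushdown_ne hj hij]
  have hxr : x % p < p := Nat.mod_lt _ hp
  by_cases hxi : x % p = i
  · constructor
    · rintro (⟨h, _⟩ | ⟨_, h⟩)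
      · exact absurd hxi h
      · rw [hxi]; exact h
    · intro h
      rw [hxi] at h
      exact Or.inr ⟨hxi, h⟩
  · constructor
    · rintro (⟨_, hC⟩ | ⟨h, _⟩)
      · rw [mem_pushdown hj] at hC
        rcases hC with ⟨hxj, hxB⟩ | ⟨hxj, hxd⟩
        · exact (mem_iff_div_lt hp hxr (F1_dc h1 (x % p) hxr hxi hxj) rfl).mp hxB
        · rw [hxj]; exact hxd
      · exact absurd h hxi
    · intro h
      left
      refine ⟨hxi, ?_⟩
      rw [mem_pushdown hj]
      by_cases hxj : x % p = j
      · rw [hxj] at h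
        exact Or.inr ⟨hxj, h⟩
      · exact Or.inl ⟨hxj, (mem_iff_div_lt hp hxr (F1_dc h1 (x % p) hxr hxi hxj) rfl).mpr h⟩

lemma pushdown_eq_pushUp_same {p i : ℕ} (hp : 0 < p) (hi : i < p) {B : Finset ℕ}
    (h1 : F1 p i i B) : pushdown p i B = pushUp p B := by
  ext x
  rw [mem_pushdown hi, mem_pushUp hp]
  have hxr : x % p < p := Nat.mod_lt _ hp
  by_cases hxi : x % p = i
  · constructor
    · rintro (⟨h, _⟩ | ⟨_, h⟩)
      · exact absurd hxi h
      · rw [hxi]; exact h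
    · intro h
      rw [hxi] at h
      exact Or.inr ⟨hxi, h⟩
  · constructor
    · rintro (⟨_, hB⟩ | ⟨h, _⟩)
      · exact (mem_iff_div_lt hp hxr (F1_dc h1 (x % p) hxr hxi hxi) rfl).mp hB
      · exact absurd h hxi
    · intro h
      exact Or.inl ⟨hxi, (mem_iff_div_lt hp hxr (F1_dc h1 (x % p) hxr hxi hxi) rfl).mpr h⟩

lemma quot_zero_same {p i : ℕ} (hp2 : 2 ≤ p) (hi : i < p) {B : Finset ℕ}
    (hF2 : F2 p i B) (hF3 : F3 p i B) : ∀ t, quotientPart p i B t = 0 := by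
  intro t
  rcases Nat.lt_or_ge t (runnerSet p i B).card with ht | ht
  · unfold quotientPart
    rw [Finset.card_eq_zero, Finset.filter_eq_empty_iff]
    rintro u hu ⟨hum, huB⟩
    rw [Finset.mem_range] at hu
    have hcb := nthLargest_mem ht
    have hcbB : nthLargest (runnerSet p i B) t ∈ B := (Finset.mem_filter.mp hcb).1
    have hcbm : nthLargest (runnerSet p i B) t % p = i := (Finset.mem_filter.mp hcb).2
    have hu1m : (u + 1) % p ≠ i := by
      have h1 : (u + 1) % p = (u % p + 1) % p := by
        rw [Nat.add_mod, Nat.mod_eq_of_lt (by omega : (1:ℕ) < p)]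
      have h2 : u % p < p := Nat.mod_lt _ (by omega)
      rcases Nat.lt_or_ge (u % p + 1) p with hlt | hge
      · rw [h1, Nat.mod_eq_of_lt hlt]; omega
      · have he : u % p + 1 = p := by omega
        rw [h1, he, Nat.mod_self]; omega
    have hdvd : p ∣ nthLargest (runnerSet p i B) t - u :=
      (Nat.modEq_iff_dvd' (by omega)).mp (by show u % p = _ % p; omega)
    have hge : u + p ≤ nthLargest (runnerSet p i B) t := by
      have := Nat.le_of_dvd (by omega) hdvd
      omega
    have hu1 : u + 1 ∈ B := hF3 _ hcbB hcbm (u + 1) (by omega) hu1m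
    have := hF2 u hum huB (u + 1) hu1 (by omega)
    exact hu1m this
  · exact quotientPart_of_le ht

/-- For a β-set `B` of `λ` satisfying (F1)–(F3) for runners `i`, `j`:
(a) `λ − λ(0) = p·λ^{(i)}`; (b) `λ' − λ'(0) = p·(λ^{(j)})'`; and
(c) `(λ'(0))' = κ_p(λ) + (λ − λ(0))`, where `κ_p(λ)` is the partition represented by the
pushed-up set. -/
theorem phi_eq_of_F_conditions (p : ℕ) (hp : p.Prime) (f : ℕ → ℕ) (hf : IsPartition f)
    (s : ℕ) (B : Finset ℕ) (hB : IsBetaSet f s B)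
    (i j : ℕ) (hi : i < p) (hj : j < p)
    (h1 : F1 p i j B) (h2 : F2 p i B) (h3 : F3 p j B)
    (c c' : ℕ → ℕ → ℕ)
    (hc : IsPAdicExpansion p f c) (hc' : IsPAdicExpansion p (conjugate f) c') :
    (∀ t, f t = c 0 t + p * quotientPart p i B t) ∧
    (∀ t, conjugate f t = c' 0 t + p * conjugate (quotientPart p j B) t) ∧
    (∀ t, conjugate (c' 0) t = partOfSet (pushUp p B) t + (f t - c 0 t)) := by
  have hp2 : 2 ≤ p := hp.two_le
  have hp0 : 0 < p := by omega
  have hfB : ∀ t, partOfSet B t = f t := betaSet_partOfSet hf hB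
  -- part (a)
  have hdecompB := part_decomp hp0 hi h2
  have hrestB : IsPRestricted p (partOfSet (pushdown p i B)) :=
    restricted_of_dc hp0 hi (F2_pushdown hp0 hi h2) (dc_pushdown hi B)
  obtain ⟨g, hg⟩ := expansion_split hc
  have huniqA : ∀ t, c 0 t = partOfSet (pushdown p i B) t :=
    restricted_unique hp2 (hc.1 0) hrestB (fun t => by
      rw [← hg t, ← hfB t]
      exact hdecompB t)
  have partA : ∀ t, f t = c 0 t + p * quotientPart p i B t := by
    intro t
    rw [huniqA t, ← hfB t]
    exact hdecompB t
  -- duality setup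
  set M := B.sup id + 1 with hM
  have hBL : ∀ b ∈ B, b < p * M := by
    intro b hb
    have hb1 : b ≤ B.sup id := by simpa using Finset.le_sup (f := id) hb
    have hb2 : M ≤ p * M := Nat.le_mul_of_pos_left M hp0
    omega
  have hj' : p - 1 - j < p := by omega
  have hBsL : ∀ b ∈ compRev (p * M) B, b < p * M := fun b hb => (mem_compRev.mp hb).1
  have hF2s : F2 p (p - 1 - j) (compRev (p * M) B) := F3_to_F2 hp0 hj hBL h3
  have hdecompBs := part_decomp hp0 hj' hF2s
  have hrestBs := restricted_of_dc hp0 hj' (F2_pushdown hp0 hj' hF2s)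
    (dc_pushdown hj' (compRev (p * M) B))
  have hconjf : ∀ t, partOfSet (compRev (p * M) B) t = conjugate f t := by
    intro t
    rw [partOfSet_compRev hBL t]
    exact conjugate_congr hfB t
  obtain ⟨g', hg'⟩ := expansion_split hc'
  have huniqB : ∀ t,
      c' 0 t = partOfSet (pushdown p (p - 1 - j) (compRev (p * M) B)) t :=
    restricted_unique hp2 (hc'.1 0) hrestBs (fun t => by
      rw [← hg' t, ← hconjf t]
      exact hdecompBs t)
  have hQdual : ∀ t, quotientPart p (p - 1 - j) (compRev (p * M) B) t
      = conjugate (quotientPart p j B) t := by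
    intro t
    rw [quotientPart_eq_partOfSet hj' (compRev (p * M) B) t, ridx_compRev hp0 hj hBL,
      partOfSet_compRev (ridx_subset_range hp0 hj hBL) t]
    exact conjugate_congr (fun u => (quotientPart_eq_partOfSet hj B u).symm) t
  have partB : ∀ t, conjugate f t = c' 0 t + p * conjugate (quotientPart p j B) t := by
    intro t
    rw [huniqB t, ← hQdual t, ← hconjf t]
    exact hdecompBs t
  -- part (c)
  have hTL : ∀ b ∈ pushdown p (p - 1 - j) (compRev (p * M) B), b < p * M :=
    pushdown_subset hp0 hj' hBsL
  have hCc : ∀ t, conjugate (c' 0) t = partOfSet (pushdown p j B) t := by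
    intro t
    rw [← compRev_pushdown hp0 hj hBL, partOfSet_compRev hTL t]
    exact conjugate_congr huniqB t
  have partC : ∀ t, conjugate (c' 0) t = partOfSet (pushUp p B) t + (f t - c 0 t) := by
    intro t
    have hsub : f t - c 0 t = p * quotientPart p i B t := by
      have := partA t
      omega
    rw [hCc t, hsub]
    by_cases hij : i = j
    · subst hij
      rw [pushdown_eq_pushUp_same hp0 hi h1, quot_zero_same hp2 hi h2 h3 t]
      simp
    · have hdecompC := part_decomp hp0 hi (F2_pushdown_ne hp0 hj hij h2)
      rw [hdecompC t, pushdown_pushdown_eq_pushUp hp0 hi hj hij h1,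
        quot_pushdown_ne hj hij B t]
  exact ⟨partA, partB, partC⟩
end

section
/- Let p be an odd prime, let r > 0, and let λ (a partition of n) and μ (a partition of n+r) form a pair of adjacent JM-partitions. Then λ − λ(0) = μ − μ(0) and λ' − λ'(0) = μ' − μ'(0), where ξ(0) denotes the 0-th term of the p-adic expansion of a partition ξ and ξ' its conjugate. In particular, the pairs Φ(λ) = ((λ'(0))' | λ' − λ'(0)) and Φ(μ) = ((μ'(0))' | μ' − μ'(0)) have equal second components. -/
/-- `f` is a partition of `n`. -/
def IsPartitionOf (n : ℕ) (f : ℕ → ℕ) : Prop :=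
  IsPartition f ∧ ∃ N, (∀ i, N ≤ i → f i = 0) ∧ ∑ i ∈ Finset.range N, f i = n

/-- Hook length of the node `(i, j)` (0-indexed). -/
noncomputable def hookLength (f : ℕ → ℕ) (i j : ℕ) : ℕ :=
  (f i - (j + 1)) + (conjugate f j - (i + 1)) + 1

/-- `f` is a JM-partition for the prime `p`. -/
def IsJM (p : ℕ) (f : ℕ → ℕ) : Prop :=
  ¬ ∃ a b x y : ℕ, b < f a ∧ y < f a ∧ b < f x ∧
      0 < padicValNat p (hookLength f a b) ∧
      padicValNat p (hookLength f x b) ≠ padicValNat p (hookLength f a b) ∧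
      padicValNat p (hookLength f a y) ≠ padicValNat p (hookLength f a b)

/-- The `p`-residue of the node `(i, j)` (0-indexed): `(j - i) mod p`. -/
def pResidue (p : ℕ) (i j : ℕ) : ZMod p := (j : ZMod p) - (i : ZMod p)

/-- The node `(i, j)` (0-indexed) is addable for `f`. -/
def IsAddable (f : ℕ → ℕ) (i j : ℕ) : Prop :=
  f i = j ∧ (i = 0 ∨ j < f (i - 1))

/-- The node `(i, j)` (0-indexed) is removable for `f`. -/
def IsRemovable (f : ℕ → ℕ) (i j : ℕ) : Prop :=
  f i = j + 1 ∧ f (i + 1) ≤ j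

/-- `[g]` is obtained from `[f]` by adding all `r` addable nodes of `p`-residue `t`, `[f]`
having exactly `r` addable nodes and no removable nodes of this residue. -/
def AdjacentAt (p r : ℕ) (t : ZMod p) (f g : ℕ → ℕ) : Prop :=
  Nat.card {x : ℕ × ℕ | IsAddable f x.1 x.2 ∧ pResidue p x.1 x.2 = t} = r ∧
  (∀ i j, IsRemovable f i j → pResidue p i j ≠ t) ∧
  (∀ i j : ℕ, j < g i ↔ (j < f i ∨ (IsAddable f i j ∧ pResidue p i j = t)))

/-- `f` and `g` form a pair of adjacent JM-partitions. -/
def AdjacentJMPair (p r : ℕ) (f g : ℕ → ℕ) : Prop :=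
  IsJM p f ∧ IsJM p g ∧ ∃ t : ZMod p, AdjacentAt p r t f g


section AuxJM

-- Galois connection between a partition and its conjugate
lemma galois (f : ℕ → ℕ) (hf : IsPartition f) (i j : ℕ) :
    j < f i ↔ i < conjugate f j := by
  obtain ⟨hanti, N, hN⟩ := hf
  have hne : {i : ℕ | f i ≤ j}.Nonempty := ⟨N, by simp [hN N le_rfl]⟩
  set m := sInf {i : ℕ | f i ≤ j} with hm
  have hmem : f m ≤ j := Nat.sInf_mem hne
  have hset : {i : ℕ | j < f i} = Set.Iio m := by
    ext a
    simp only [Set.mem_setOf_eq, Set.mem_Iio]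
    constructor
    · intro ha
      by_contra hle
      exact absurd (le_trans (hanti (le_of_not_gt hle)) hmem) (not_le.2 ha)
    · intro ha
      have := Nat.notMem_of_lt_sInf (s := {i : ℕ | f i ≤ j}) ha
      simpa using lt_of_not_ge this
  have : conjugate f j = m := by
    rw [conjugate]
    rw [hset]
    exact Set.ncard_Iio_nat m
  rw [this]
  constructor
  · intro h
    have : i ∈ Set.Iio m := hset ▸ (Set.mem_setOf_eq ▸ h)
    exact this
  · intro h
    have : i ∈ {i : ℕ | j < f i} := hset ▸ (Set.mem_Iio.2 h)
    exact this

lemma conj_partition (f : ℕ → ℕ) (hf : IsPartition f) : IsPartition (conjugate f) := by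
  have G := galois f hf
  constructor
  · intro j j' hjj'
    by_contra h
    push_neg at h
    have h1 : conjugate f j < conjugate f j' := h
    have h2 : j' < f (conjugate f j) := (G _ _).2 h1
    have h3 : j < f (conjugate f j) := lt_of_le_of_lt hjj' h2
    exact absurd ((G _ _).1 h3) (lt_irrefl _)
  · refine ⟨f 0, fun j hj => ?_⟩
    by_contra h
    have h0 : 0 < conjugate f j := Nat.pos_of_ne_zero h
    have := (G 0 j).2 h0
    omega

lemma addable_conj (f : ℕ → ℕ) (hf : IsPartition f) (a b : ℕ) :
    IsAddable f a b ↔ IsAddable (conjugate f) b a := by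
  have G := galois f hf
  have h1 : f a ≤ b ↔ conjugate f b ≤ a := by
    rw [← not_lt, ← not_lt, G]
  have h2 : b ≤ f a ↔ (b = 0 ∨ a < conjugate f (b - 1)) := by
    rcases Nat.eq_zero_or_pos b with hb | hb
    · simp [hb]
    · rw [← G]
      constructor
      · intro h; right; omega
      · intro h; rcases h with h | h <;> omega
  have h3 : (a = 0 ∨ b < f (a - 1)) ↔ a ≤ conjugate f b := by
    rcases Nat.eq_zero_or_pos a with ha | ha
    · simp [ha]
    · constructor
      · intro h
        rcases h with h | h
        · omega
        · have := (G (a-1) b).1 h; omega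
      · intro h
        right
        exact (G (a-1) b).2 (by omega)
  constructor
  · rintro ⟨he, ho⟩
    have hle : conjugate f b ≤ a := h1.1 (le_of_eq he)
    have hge : a ≤ conjugate f b := h3.1 ho
    exact ⟨le_antisymm hle hge, h2.1 (ge_of_eq he)⟩
  · rintro ⟨he, ho⟩
    have hble : b ≤ f a := h2.2 ho
    have hbge : f a ≤ b := h1.2 (le_of_eq he)
    exact ⟨le_antisymm hbge hble, h3.2 (ge_of_eq he)⟩

lemma removable_conj (f : ℕ → ℕ) (hf : IsPartition f) (a b : ℕ) :
    IsRemovable f a b ↔ IsRemovable (conjugate f) b a := by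
  have G := galois f hf
  constructor
  · rintro ⟨he, ho⟩
    have h1 : a < conjugate f b := (G a b).1 (by omega)
    have h2 : conjugate f (b+1) ≤ a := by
      rw [← not_lt, ← G]; omega
    have h3 : conjugate f b ≤ a + 1 := by
      rw [← not_lt, ← G]; omega
    exact ⟨by omega, h2⟩
  · rintro ⟨he, ho⟩
    have h1 : b < f a := (G a b).2 (by omega)
    have h2 : f (a+1) ≤ b := by
      rw [← not_lt, G]; omega
    have h3 : f a ≤ b + 1 := by
      rw [← not_lt, G]; omega
    exact ⟨by omega, h2⟩

-- telescoping for ℕ-valued decreasing sequences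
lemma tel1 (u : ℕ → ℕ) (hu : ∀ j, u (j + 1) ≤ u j) :
    ∀ M k, k ≤ M → (∑ j ∈ Finset.Ico k M, (u j - u (j + 1))) + u M = u k := by
  intro M
  induction M with
  | zero => intro k hk; interval_cases k; simp
  | succ M ih =>
    intro k hk
    rcases Nat.eq_or_lt_of_le hk with h | h
    · subst h; simp
    · have hkM : k ≤ M := by omega
      rw [Finset.sum_Ico_succ_top hkM]
      have := ih k hkM
      have := hu M
      omega

lemma tel2 (u : ℕ → ℕ) (hu : ∀ j, u (j + 1) ≤ u j) (M : ℕ) (hM : ∀ j, M ≤ j → u j = 0) :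
    ∀ k, u k = ∑ j ∈ Finset.Ico k M, (u j - u (j + 1)) := by
  intro k
  rcases le_or_gt k M with h | h
  · have := tel1 u hu M k h
    rw [hM M le_rfl] at this
    omega
  · rw [Finset.Ico_eq_empty (by omega), hM k (by omega), Finset.sum_empty]

lemma exp_sum (p : ℕ) (hp : 2 ≤ p) (f : ℕ → ℕ) (c : ℕ → ℕ → ℕ)
    (hf : Antitone f) (M : ℕ) (hM : ∀ j, M ≤ j → f j = 0)
    (hc : IsPAdicExpansion p f c) (k : ℕ) :
    f k = c 0 k + ∑ j ∈ Finset.Ico k M, p * ((f j - f (j + 1)) / p) := by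
  obtain ⟨hres, Nc, hNc, hsum⟩ := hc
  have hanti : ∀ i, ∀ j, c i (j + 1) ≤ c i j := fun i j =>
    (hres i).1.1 (Nat.le_succ j)
  -- c 0 vanishes beyond M
  have hc0z : ∀ j, M ≤ j → c 0 j = 0 := by
    intro j hj
    rcases Nat.eq_zero_or_pos Nc with h0 | h0
    · exact hNc 0 j (by omega)
    · have h := hsum j
      rw [hM j hj] at h
      have := Finset.sum_eq_zero_iff.1 h.symm 0 (Finset.mem_range.2 h0)
      simpa using this
  -- difference identity
  have key : ∀ j, f (j + 1) + ∑ i ∈ Finset.range Nc, p ^ i * (c i j - c i (j + 1)) = f j := by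
    intro j
    rw [hsum (j + 1), hsum j, ← Finset.sum_add_distrib]
    apply Finset.sum_congr rfl
    intro i _
    rw [← Nat.mul_add]
    congr 1
    have := hanti i j
    omega
  -- digit identity
  have hdig : ∀ j, (f j - f (j + 1)) % p = c 0 j - c 0 (j + 1) := by
    intro j
    have hD : f j - f (j + 1) = ∑ i ∈ Finset.range Nc, p ^ i * (c i j - c i (j + 1)) := by
      have h1 := key j
      have h2 : f (j + 1) ≤ f j := hf (Nat.le_succ j)
      omega
    rcases Nat.eq_zero_or_pos Nc with h0 | h0
    · have hz0 := hNc 0 j (by omega)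
      have hz1 := hNc 0 (j + 1) (by omega)
      rw [hD, h0]
      simp [hz0, hz1]
    · obtain ⟨m, hm⟩ : ∃ m, Nc = m + 1 := ⟨Nc - 1, by omega⟩
      have hsplit : ∑ i ∈ Finset.range Nc, p ^ i * (c i j - c i (j + 1)) =
          (∑ i ∈ Finset.range m, p ^ (i + 1) * (c (i + 1) j - c (i + 1) (j + 1)))
            + p ^ 0 * (c 0 j - c 0 (j + 1)) := by
        rw [hm, Finset.sum_range_succ']
      have hfac : (∑ i ∈ Finset.range m, p ^ (i + 1) * (c (i + 1) j - c (i + 1) (j + 1)))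
          = p * ∑ i ∈ Finset.range m, p ^ i * (c (i + 1) j - c (i + 1) (j + 1)) := by
        rw [Finset.mul_sum]
        apply Finset.sum_congr rfl
        intro i _
        ring
      have hlt : c 0 j - c 0 (j + 1) < p := by
        have := (hres 0).2 j
        omega
      rw [hD, hsplit, hfac, pow_zero, one_mul, Nat.mul_add_mod, Nat.mod_eq_of_lt hlt]
  -- telescope both
  have htelf := tel2 f (fun j => hf (Nat.le_succ j)) M hM k
  have htelc := tel2 (c 0) (hanti 0) M hc0z k
  rw [htelf, htelc, ← Finset.sum_add_distrib]
  apply Finset.sum_congr rfl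
  intro j _
  have h1 := hdig j
  have h2 := Nat.mod_add_div (f j - f (j + 1)) p
  omega

-- structure of g relative to f
lemma gstruct (p : ℕ) (t : ZMod p) (f g : ℕ → ℕ)
    (h3 : ∀ i j : ℕ, j < g i ↔ (j < f i ∨ (IsAddable f i j ∧ pResidue p i j = t)))
    (i : ℕ) :
    (g i = f i ∧ ¬(IsAddable f i (f i) ∧ pResidue p i (f i) = t)) ∨
    (g i = f i + 1 ∧ (IsAddable f i (f i) ∧ pResidue p i (f i) = t)) := by
  have hub : g i ≤ f i + 1 := by
    by_contra h
    push_neg at h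
    rcases (h3 i (f i + 1)).1 (by omega) with h' | ⟨⟨he, _⟩, _⟩ <;> omega
  have hlb : f i ≤ g i := by
    rcases Nat.eq_zero_or_pos (f i) with h0 | h0
    · omega
    · have := (h3 i (f i - 1)).2 (Or.inl (by omega))
      omega
  by_cases hA : IsAddable f i (f i) ∧ pResidue p i (f i) = t
  · right
    have := (h3 i (f i)).2 (Or.inr hA)
    exact ⟨by omega, hA⟩
  · left
    refine ⟨?_, hA⟩
    by_contra h
    have hlt : f i < g i := by omega
    rcases (h3 i (f i)).1 hlt with h' | h'
    · omega
    · exact hA h'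

-- cast lemma : if (d : ℕ) with d % p = p - 1 then (d : ZMod p) = -1
lemma cast_mod_eq (p : ℕ) (hp : 2 ≤ p) (d e : ℕ) (he : e < p) (h : d % p = e) :
    (d : ZMod p) = (e : ℕ) := by
  conv_lhs => rw [← Nat.div_add_mod d p]
  push_cast
  rw [h]
  simp [ZMod.natCast_self]

lemma castp_sub_one (p : ℕ) (hp : 2 ≤ p) : ((p - 1 : ℕ) : ZMod p) = -1 := by
  have : ((p - 1 : ℕ) : ZMod p) = (p : ZMod p) - 1 := by
    have h1 : 1 ≤ p := by omega
    push_cast [Nat.cast_sub h1]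
    ring
  rw [this, ZMod.natCast_self]
  ring

lemma core (p : ℕ) (hp : 2 ≤ p) (t : ZMod p) (f g : ℕ → ℕ) (cf cg : ℕ → ℕ → ℕ)
    (hf : IsPartition f) (hg : IsPartition g)
    (h2 : ∀ i j, IsRemovable f i j → pResidue p i j ≠ t)
    (h3 : ∀ i j : ℕ, j < g i ↔ (j < f i ∨ (IsAddable f i j ∧ pResidue p i j = t)))
    (hcf : IsPAdicExpansion p f cf) (hcg : IsPAdicExpansion p g cg) (k : ℕ) :
    f k - cf 0 k = g k - cg 0 k := by
  obtain ⟨hfa, Nf, hNf⟩ := hf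
  obtain ⟨hga, Ng, hNg⟩ := hg
  set M := max Nf Ng with hM
  have hMf : ∀ j, M ≤ j → f j = 0 := fun j hj => hNf j (by omega)
  have hMg : ∀ j, M ≤ j → g j = 0 := fun j hj => hNg j (by omega)
  have hdiff : ∀ j, (g j - g (j + 1)) / p = (f j - f (j + 1)) / p := by
    intro j
    have hba : f (j + 1) ≤ f j := hfa (Nat.le_succ j)
    set a := f j with ha
    set b := f (j + 1) with hb
    rcases gstruct p t f g h3 j with ⟨e0, hA0⟩ | ⟨e0, hA0⟩ <;>
      rcases gstruct p t f g h3 (j + 1) with ⟨e1, hA1⟩ | ⟨e1, hA1⟩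
    · rw [e0, e1]
    · -- g j = a, g (j+1) = b + 1 : Add at j+1, not at j
      have hblt : b < a := by
        have := hA1.1.2
        simp only [Nat.add_sub_cancel] at this
        rcases this with h | h
        · omega
        · exact h
      have hmod : (a - b) % p ≠ 0 := by
        intro hm
        have hdvd : p ∣ (a - b) := Nat.dvd_of_mod_eq_zero hm
        have hge : p ≤ a - b := Nat.le_of_dvd (by omega) hdvd
        refine h2 j (a - 1) ⟨by omega, by omega⟩ ?_
        have hres1 : (b : ZMod p) - ((j + 1 : ℕ) : ZMod p) = t := hA1.2
        have hcast : ((a - b : ℕ) : ZMod p) = 0 := by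
          rw [cast_mod_eq p hp _ 0 (by omega) hm]; simp
        have habe : (b : ZMod p) + ((a - b : ℕ) : ZMod p) = (a : ZMod p) := by
          rw [← Nat.cast_add, Nat.add_sub_cancel' hba]
        have hab : (b : ZMod p) = (a : ZMod p) := by rw [hcast] at habe; simpa using habe
        show ((a - 1 : ℕ) : ZMod p) - (j : ZMod p) = t
        have ha1 : ((a - 1 : ℕ) : ZMod p) = (a : ZMod p) - 1 := by
          have : 1 ≤ a := by omega
          push_cast [Nat.cast_sub this]
          ring
        rw [ha1, ← hab, ← hres1]
        push_cast
        ring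
      have hdd : g j - g (j + 1) = (a - b) - 1 := by omega
      rw [hdd]
      have heq : (a - b) - 1 = p * ((a - b) / p) + ((a - b) % p - 1) := by
        have := Nat.div_add_mod (a - b) p
        omega
      have hplt : (a - b) % p < p := Nat.mod_lt _ (by omega)
      have h4 : ((a - b) % p - 1) / p = 0 := Nat.div_eq_of_lt (by omega)
      rw [heq, Nat.mul_add_div (by omega), h4, add_zero]
    · -- g j = a + 1, g (j+1) = b : Add at j, not at j+1
      have hmod : (a - b) % p ≠ p - 1 := by
        intro hm
        have hge : p - 1 ≤ a - b := by
          have := Nat.mod_le (a - b) p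
          omega
        apply hA1
        refine ⟨⟨rfl, Or.inr ?_⟩, ?_⟩
        · simp only [Nat.add_sub_cancel]
          omega
        · have hres0 : (a : ZMod p) - (j : ZMod p) = t := hA0.2
          have hcast : ((a - b : ℕ) : ZMod p) = -1 := by
            rw [cast_mod_eq p hp _ (p - 1) (by omega) hm, castp_sub_one p hp]
          have habe : (b : ZMod p) + ((a - b : ℕ) : ZMod p) = (a : ZMod p) := by
            rw [← Nat.cast_add, Nat.add_sub_cancel' hba]
          have hab : (b : ZMod p) = (a : ZMod p) + 1 := by
            rw [hcast] at habe
            linear_combination habe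
          show (b : ZMod p) - ((j + 1 : ℕ) : ZMod p) = t
          rw [hab, ← hres0]
          push_cast
          ring
      have hdd : g j - g (j + 1) = (a - b) + 1 := by omega
      rw [hdd]
      have heq : (a - b) + 1 = p * ((a - b) / p) + ((a - b) % p + 1) := by
        have := Nat.div_add_mod (a - b) p
        omega
      have hplt : (a - b) % p < p := Nat.mod_lt _ (by omega)
      have h4 : ((a - b) % p + 1) / p = 0 := Nat.div_eq_of_lt (by omega)
      rw [heq, Nat.mul_add_div (by omega), h4, add_zero]
    · have hdd : g j - g (j + 1) = a - b := by omega
      rw [hdd]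
  have hefs := exp_sum p hp f cf hfa M hMf hcf k
  have hegs := exp_sum p hp g cg hga M hMg hcg k
  have hsame : ∑ j ∈ Finset.Ico k M, p * ((g j - g (j + 1)) / p)
      = ∑ j ∈ Finset.Ico k M, p * ((f j - f (j + 1)) / p) := by
    apply Finset.sum_congr rfl
    intro j _
    rw [hdiff j]
  omega

end AuxJM

/-- If `f` (a partition of `n`) and `g` (a partition of `n + r`) form a
pair of adjacent JM-partitions, then `λ − λ(0) = μ − μ(0)` and `λ' − λ'(0) = μ' − μ'(0)`,
where `ξ(0)` denotes the 0-th term of the `p`-adic expansion. In particular, `Φ(f)` and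
`Φ(g)` have equal second components. -/
theorem adjacent_JM_pair_padic (p : ℕ) (hp : p.Prime) (hodd : Odd p)
    (n r : ℕ) (hr : 0 < r)
    (f g : ℕ → ℕ) (hf : IsPartitionOf n f) (hg : IsPartitionOf (n + r) g)
    (hadj : AdjacentJMPair p r f g)
    (cf cg cf' cg' : ℕ → ℕ → ℕ)
    (hcf : IsPAdicExpansion p f cf) (hcg : IsPAdicExpansion p g cg)
    (hcf' : IsPAdicExpansion p (conjugate f) cf')
    (hcg' : IsPAdicExpansion p (conjugate g) cg') :
    (∀ k, f k - cf 0 k = g k - cg 0 k) ∧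
    (∀ k, conjugate f k - cf' 0 k = conjugate g k - cg' 0 k) := by
  obtain ⟨hJMf, hJMg, t, hcard, hrem, hiff⟩ := hadj
  have hp2 : 2 ≤ p := hp.two_le
  have hfp : IsPartition f := hf.1
  have hgp : IsPartition g := hg.1
  constructor
  · intro k
    exact core p hp2 t f g cf cg hfp hgp hrem hiff hcf hcg k
  · intro k
    have hfp' : IsPartition (conjugate f) := conj_partition f hfp
    have hgp' : IsPartition (conjugate g) := conj_partition g hgp
    have h2' : ∀ i j, IsRemovable (conjugate f) i j → pResidue p i j ≠ -t := by
      intro i j hrm heq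
      have hrf : IsRemovable f j i := (removable_conj f hfp j i).2 hrm
      apply hrem j i hrf
      have hneg : pResidue p i j = -pResidue p j i := by
        unfold pResidue; ring
      have : -pResidue p j i = -t := by rw [← hneg, heq]
      exact neg_injective this
    have h3' : ∀ i j : ℕ, j < conjugate g i ↔
        (j < conjugate f i ∨ (IsAddable (conjugate f) i j ∧ pResidue p i j = -t)) := by
      intro i j
      rw [← galois g hgp j i, hiff j i, galois f hfp j i]
      have hneg : pResidue p i j = -pResidue p j i := by
        unfold pResidue; ring
      constructor
      · rintro (h | ⟨hA, hres⟩)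
        · exact Or.inl h
        · exact Or.inr ⟨(addable_conj f hfp j i).1 hA, by rw [hneg, hres]⟩
      · rintro (h | ⟨hA, hres⟩)
        · exact Or.inl h
        · refine Or.inr ⟨(addable_conj f hfp j i).2 hA, ?_⟩
          have : -pResidue p j i = -t := by rw [← hneg, hres]
          exact neg_injective this
    exact core p hp2 (-t) (conjugate f) (conjugate g) cf' cg' hfp' hgp' h2' h3' hcf' hcg' k
end

section
/- Let p be a prime, let λ be a partition of n with s-element β-set B, and let ℓ ∈ {1,…,p−1}. Suppose that for every a ≥ 0, if ap+ℓ ∈ B then ap+ℓ−1 ∈ B, and set r := #{a ≥ 0 : ap+ℓ−1 ∈ B and ap+ℓ ∉ B}; assume r ≥ 1. Let B' be obtained from B by interchanging runners ℓ−1 and ℓ, i.e. B' = (B ∖ {b ∈ B : b ≡ ℓ−1 or ℓ (mod p)}) ∪ {ap+ℓ : ap+ℓ−1 ∈ B} ∪ {ap+ℓ−1 : ap+ℓ ∈ B}. Then: (a) [λ] has exactly r addable nodes of p-residue (ℓ−s) mod p and no removable nodes of this p-residue; (b) the partition μ represented by B' is a partition of n+r whose Young diagram is [λ] together with all addable nodes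 of [λ] of p-residue (ℓ−s) mod p. -/
/- ### Auxiliary lemmas -/

lemma betaFun_strictAnti (g : ℕ → ℕ) (hg : Antitone g) (s : ℕ) :
    ∀ k k', k < k' → k' < s → g k' + (s - 1 - k') < g k + (s - 1 - k) := by
  intro k k' hkk' hk's
  have := hg (le_of_lt hkk')
  omega

lemma sort_betaSet (g : ℕ → ℕ) (hg : Antitone g) (s : ℕ)
    (C : Finset ℕ) (hC : C = (Finset.range s).image (fun k => g k + (s - 1 - k))) :
    (C.sort (· ≤ ·)).reverse = (List.range s).map (fun k => g k + (s - 1 - k)) := by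
  set c : ℕ → ℕ := fun k => g k + (s - 1 - k) with hc
  have hpw : List.Pairwise (fun a b => c b < c a) (List.range s) := by
    have := List.pairwise_lt_range (n := s)
    refine List.Pairwise.imp_of_mem ?_ this
    intro a b ha hb hab
    exact betaFun_strictAnti g hg s a b hab (List.mem_range.mp hb)
  have hpw' : List.Pairwise (fun a b => b < a) ((List.range s).map c) :=
    List.pairwise_map.mpr hpw
  have hnd : ((List.range s).map c).Nodup := hpw'.imp (fun h => (ne_of_lt h).symm)
  have hsorted : List.Pairwise (· ≤ ·) ((List.range s).map c).reverse := by
    rw [List.pairwise_reverse]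
    exact hpw'.imp le_of_lt
  have hperm : (C.sort (· ≤ ·)).Perm ((List.range s).map c).reverse := by
    apply List.perm_of_nodup_nodup_toFinset_eq (Finset.sort_nodup _ _)
      (by rw [List.nodup_reverse]; exact hnd)
    rw [Finset.sort_toFinset]
    ext x
    simp only [hC, List.toFinset_reverse, List.mem_toFinset, List.mem_map,
      List.mem_range, Finset.mem_image, Finset.mem_range]
  have := List.Perm.eq_of_pairwise' (Finset.pairwise_sort _ _) hsorted hperm
  rw [this, List.reverse_reverse]

lemma partOfSet_betaSet (g : ℕ → ℕ) (hg : Antitone g) (s : ℕ) (hgs : ∀ i, s ≤ i → g i = 0)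
    (C : Finset ℕ) (hC : C = (Finset.range s).image (fun k => g k + (s - 1 - k))) :
    ∀ t, partOfSet C t = g t := by
  set c : ℕ → ℕ := fun k => g k + (s - 1 - k) with hc
  have hsort := sort_betaSet g hg s C hC
  intro t
  by_cases ht : t < s
  · have hnth : nthLargest C t = c t := by
      rw [nthLargest, hsort, List.getD_eq_getElem?_getD, List.getElem?_map,
        List.getElem?_range ht]
      rfl
    have hfiltmem : (Finset.range (c t)).filter (fun u => u ∈ C) =
        ((Finset.range s).filter (fun k => t < k)).image c := by
      ext u
      simp only [Finset.mem_filter, Finset.mem_range, Finset.mem_image, hC]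
      constructor
      · rintro ⟨hu, k, hk, rfl⟩
        refine ⟨k, ⟨hk, ?_⟩, rfl⟩
        by_contra hkt
        push_neg at hkt
        rcases lt_or_eq_of_le hkt with h | h
        · exact absurd hu (lt_asymm (betaFun_strictAnti g hg s k t h ht))
        · rw [h] at hu; exact absurd hu (lt_irrefl _)
      · rintro ⟨k, ⟨hk, htk⟩, rfl⟩
        exact ⟨betaFun_strictAnti g hg s t k htk hk, k, hk, rfl⟩
    have hcardmem : ((Finset.range (c t)).filter (fun u => u ∈ C)).card = s - 1 - t := by
      rw [hfiltmem, Finset.card_image_of_injOn, ]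
      · have : (Finset.range s).filter (fun k => t < k) = Finset.Ioo t s := by
          ext k; simp [Finset.mem_Ioo, and_comm]
        rw [this, Nat.card_Ioo]; omega
      · intro a ha b hb hab
        simp only [Finset.coe_filter, Set.mem_setOf_eq, Finset.mem_coe,
          Finset.mem_filter, Finset.mem_range] at ha hb
        by_contra hne
        rcases lt_or_gt_of_ne hne with h | h
        · exact absurd hab (ne_of_gt (betaFun_strictAnti g hg s a b h hb.1))
        · exact absurd hab.symm (ne_of_gt (betaFun_strictAnti g hg s b a h ha.1))
    have hadd := Finset.card_filter_add_card_filter_not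
      (s := Finset.range (c t)) (fun u => u ∈ C)
    rw [Finset.card_range] at hadd
    have : partOfSet C t = ((Finset.range (c t)).filter (fun u => ¬ u ∈ C)).card := by
      simp only [partOfSet, hnth]
    rw [this]
    have hct : c t = g t + (s - 1 - t) := rfl
    omega
  · have hlen : ((C.sort (· ≤ ·)).reverse).length = s := by
      rw [hsort, List.length_map, List.length_range]
    have hnth : nthLargest C t = 0 := by
      rw [nthLargest, List.getD_eq_default _ _ (by omega)]
    simp only [partOfSet, hnth]
    simp [hgs t (by omega)]

lemma residue_iff (p s ℓ i j : ℕ) (hl1 : 1 ≤ ℓ) (hlp : ℓ < p) (hi : i < s) :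
    ((j : ZMod p) - i = (ℓ : ZMod p) - s) ↔ (j + (s - 1 - i)) % p = ℓ - 1 := by
  have h1 : (j + (s-1-i)) % p = ℓ - 1 ↔ ((j + (s-1-i) : ℕ) : ZMod p) = ((ℓ-1 : ℕ) : ZMod p) := by
    rw [ZMod.natCast_eq_natCast_iff', Nat.mod_eq_of_lt (show ℓ - 1 < p by omega)]
  rw [h1]
  push_cast [Nat.cast_sub (show i ≤ s - 1 by omega), Nat.cast_sub (show 1 ≤ s by omega),
    Nat.cast_sub hl1]
  constructor <;> intro h <;> linear_combination h

lemma cast_ne_zero_of_lt (p ℓ : ℕ) (hl1 : 1 ≤ ℓ) (hlp : ℓ < p) : (ℓ : ZMod p) ≠ 0 := by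
  intro h
  have := (ZMod.natCast_eq_natCast_iff' ℓ 0 p).mp (by rw [h]; simp)
  rw [Nat.mod_eq_of_lt hlp, Nat.zero_mod] at this
  omega

/-- Swapping runners `ℓ-1` and `ℓ` of a β-set `B` of `λ`, when runner
`ℓ-1` dominates runner `ℓ`, produces the partition obtained by adding all `r` addable
nodes of `p`-residue `(ℓ − s) mod p` to `[λ]`; moreover `[λ]` has exactly `r` addable
nodes of this residue and no removable ones. -/
theorem runner_swap (p : ℕ) (hp : p.Prime) (n : ℕ) (f : ℕ → ℕ) (hf : IsPartitionOf n f)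
    (s : ℕ) (B : Finset ℕ) (hB : IsBetaSet f s B)
    (ℓ : ℕ) (hl1 : 1 ≤ ℓ) (hlp : ℓ < p)
    (hcol : ∀ a : ℕ, a * p + ℓ ∈ B → a * p + (ℓ - 1) ∈ B)
    (r : ℕ) (hr : r = Nat.card {a : ℕ | a * p + (ℓ - 1) ∈ B ∧ a * p + ℓ ∉ B})
    (hr1 : 1 ≤ r)
    (B' : Finset ℕ)
    (hB' : ∀ x : ℕ, x ∈ B' ↔
      ((x ∈ B ∧ x % p ≠ ℓ - 1 ∧ x % p ≠ ℓ) ∨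
       (∃ a, x = a * p + ℓ ∧ a * p + (ℓ - 1) ∈ B) ∨
       (∃ a, x = a * p + (ℓ - 1) ∧ a * p + ℓ ∈ B))) :
    (Nat.card {x : ℕ × ℕ |
        IsAddable f x.1 x.2 ∧ pResidue p x.1 x.2 = (ℓ : ZMod p) - (s : ZMod p)} = r ∧
      ∀ i j, IsRemovable f i j → pResidue p i j ≠ (ℓ : ZMod p) - (s : ZMod p)) ∧
    (IsPartitionOf (n + r) (partOfSet B') ∧
      ∀ i j : ℕ, j < partOfSet B' i ↔
        (j < f i ∨ (IsAddable f i j ∧ pResidue p i j = (ℓ : ZMod p) - (s : ZMod p)))) := by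
  obtain ⟨⟨hfa, -⟩, N, hN, hsum⟩ := hf
  obtain ⟨hfs, hBdef⟩ := hB
  set b : ℕ → ℕ := fun k => f k + (s - 1 - k) with hbdef
  have hf0 : ∀ i, s ≤ i → f i = 0 := fun i hi => Nat.le_antisymm (hfs ▸ hfa hi) (Nat.zero_le _)
  have hppos : 0 < p := by omega
  have hmemB : ∀ x, x ∈ B ↔ ∃ k, k < s ∧ b k = x := by
    intro x
    simp only [hBdef, Finset.mem_image, Finset.mem_range]
  have hbanti : ∀ k k', k < k' → k' < s → b k' < b k := betaFun_strictAnti f hfa s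
  -- membership of `b i + 1`
  have hsuccB : ∀ i, i < s → (b i + 1 ∈ B ↔ (1 ≤ i ∧ f (i - 1) = f i)) := by
    intro i hi
    constructor
    · intro hmem
      obtain ⟨k, hk, hbk⟩ := (hmemB _).mp hmem
      have hki : k < i := by
        by_contra h'
        push_neg at h'
        rcases eq_or_lt_of_le h' with rfl | h''
        · omega
        · have := hbanti i k h'' hk; omega
      have hi1 : 1 ≤ i := by omega
      have h1 : b (i - 1) ≤ b k := by
        rcases eq_or_lt_of_le (show k ≤ i - 1 by omega) with h | h''
        · rw [h]
        · exact le_of_lt (hbanti k (i-1) h'' (by omega))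
      have h2 : b i < b (i - 1) := hbanti (i-1) i (by omega) hi
      have hfle := hfa (show i - 1 ≤ i by omega)
      refine ⟨hi1, ?_⟩
      simp only [hbdef] at hbk h1 h2
      omega
    · rintro ⟨hi1, hfe⟩
      have : b (i - 1) = b i + 1 := by
        simp only [hbdef]; omega
      exact (hmemB _).mpr ⟨i - 1, by omega, this⟩
  -- mod-p facts
  have hmod1 : ∀ a : ℕ, (a * p + (ℓ - 1)) % p = ℓ - 1 := by
    intro a; rw [mul_comm, Nat.mul_add_mod, Nat.mod_eq_of_lt (by omega)]
  have hmod2 : ∀ a : ℕ, (a * p + ℓ) % p = ℓ := by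
    intro a; rw [mul_comm, Nat.mul_add_mod, Nat.mod_eq_of_lt hlp]
  have hdiv1 : ∀ x, x % p = ℓ - 1 → (x / p) * p + (ℓ - 1) = x := by
    intro x hx; have := Nat.div_add_mod x p; rw [mul_comm]; omega
  have hdiv2 : ∀ x, x % p = ℓ → (x / p) * p + ℓ = x := by
    intro x hx; have := Nat.div_add_mod x p; rw [mul_comm]; omega
  -- characterization of addable nodes of the given residue
  have haddable : ∀ i j : ℕ,
      (IsAddable f i j ∧ pResidue p i j = (ℓ : ZMod p) - s) ↔
      (i < s ∧ j = f i ∧ b i % p = ℓ - 1 ∧ b i + 1 ∉ B) := by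
    intro i j
    constructor
    · rintro ⟨⟨hfi, hor⟩, hres⟩
      have hi : i < s := by
        by_contra hi'
        push_neg at hi'
        have hj0 : j = 0 := by rw [← hfi, hf0 i hi']
        have his : i = s := by
          rcases hor with rfl | hlt
          · omega
          · have : i - 1 < s := by
              by_contra h'
              push_neg at h'
              rw [hf0 _ h'] at hlt; omega
            omega
        have : (ℓ : ZMod p) = 0 := by
          subst his hj0
          simp only [pResidue, Nat.cast_zero] at hres
          linear_combination -hres
        exact cast_ne_zero_of_lt p ℓ hl1 hlp this
      refine ⟨hi, hfi.symm, ?_, ?_⟩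
      · have := (residue_iff p s ℓ i j hl1 hlp hi).mp hres
        simp only [hbdef]; rw [hfi]; exact this
      · intro hmem
        obtain ⟨hi1, hfe⟩ := (hsuccB i hi).mp hmem
        rcases hor with rfl | hlt
        · omega
        · rw [hfe, hfi] at hlt; omega
    · rintro ⟨hi, rfl, hmod, hnot⟩
      refine ⟨⟨rfl, ?_⟩, ?_⟩
      · by_cases hi0 : i = 0
        · exact Or.inl hi0
        · right
          have h1 : ¬ (1 ≤ i ∧ f (i - 1) = f i) := fun h => hnot ((hsuccB i hi).mpr h)
          have h2 : f i ≤ f (i - 1) := hfa (by omega)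
          omega
      · exact (residue_iff p s ℓ i (f i) hl1 hlp hi).mpr (by simpa [hbdef] using hmod)
  -- the finset of rows where nodes get added
  classical
  set D : Finset ℕ :=
    (Finset.range s).filter (fun k => b k % p = ℓ - 1 ∧ b k + 1 ∉ B) with hD
  have hDmem : ∀ k, k ∈ D ↔ (k < s ∧ b k % p = ℓ - 1 ∧ b k + 1 ∉ B) := by
    intro k; simp [hD]
  -- the addable-node set as a finset
  have hsetA : {x : ℕ × ℕ | IsAddable f x.1 x.2 ∧ pResidue p x.1 x.2 = (ℓ : ZMod p) - s} =
      ↑(D.image (fun k => (k, f k))) := by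
    ext x
    simp only [Set.mem_setOf_eq, Finset.coe_image, Set.mem_image, Finset.mem_coe, hDmem]
    rw [haddable x.1 x.2]
    constructor
    · rintro ⟨hi, hj, hmod, hnot⟩
      exact ⟨x.1, ⟨hi, hmod, hnot⟩, by rw [Prod.ext_iff]; exact ⟨rfl, hj.symm⟩⟩
    · rintro ⟨k, ⟨hk, hmod, hnot⟩, rfl⟩
      exact ⟨hk, rfl, hmod, hnot⟩
  have hcardA : Nat.card {x : ℕ × ℕ |
      IsAddable f x.1 x.2 ∧ pResidue p x.1 x.2 = (ℓ : ZMod p) - s} = D.card := by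
    rw [hsetA, Nat.card_coe_set_eq, Set.ncard_coe_finset,
      Finset.card_image_of_injective _ (fun a b h => congrArg Prod.fst h)]
  -- the set indexing `r` as a finset
  have hsetR : {a : ℕ | a * p + (ℓ - 1) ∈ B ∧ a * p + ℓ ∉ B} =
      ↑(D.image (fun k => b k / p)) := by
    ext a
    simp only [Set.mem_setOf_eq, Finset.coe_image, Set.mem_image, Finset.mem_coe, hDmem]
    constructor
    · rintro ⟨hin, hout⟩
      obtain ⟨k, hk, hbk⟩ := (hmemB _).mp hin
      have hm : b k % p = ℓ - 1 := by rw [hbk]; exact hmod1 a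
      have hq : b k / p = a := by
        have := hdiv1 (b k) hm
        rw [hbk] at this ⊢
        have h2 : (a * p + (ℓ - 1)) / p * p = a * p := by omega
        have hppos' : 0 < p := hppos
        nlinarith [Nat.eq_of_mul_eq_mul_right hppos' h2]
      refine ⟨k, ⟨hk, hm, ?_⟩, hq⟩
      have : b k + 1 = a * p + ℓ := by omega
      rw [this]; exact hout
    · rintro ⟨k, ⟨hk, hm, hnot⟩, rfl⟩
      have heq := hdiv1 (b k) hm
      constructor
      · rw [heq]; exact (hmemB _).mpr ⟨k, hk, rfl⟩
      · have : b k / p * p + ℓ = b k + 1 := by omega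
        rw [this]; exact hnot
  have hinjD : Set.InjOn (fun k => b k / p) ↑D := by
    intro a ha c hc hac
    simp only [Finset.mem_coe, hDmem] at ha hc
    have h1 := hdiv1 (b a) ha.2.1
    have h2 := hdiv1 (b c) hc.2.1
    have hbc : b a = b c := by
      simp only at hac
      rw [← h1, ← h2, hac]
    by_contra hne
    rcases lt_or_gt_of_ne hne with h | h
    · exact absurd hbc (ne_of_gt (hbanti a c h hc.1))
    · exact absurd hbc.symm (ne_of_gt (hbanti c a h ha.1))
  have hrD : r = D.card := by
    rw [hr, hsetR, Nat.card_coe_set_eq, Set.ncard_coe_finset,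
      Finset.card_image_of_injOn hinjD]
  -- removable nodes
  have hremov : ∀ i j, IsRemovable f i j → pResidue p i j ≠ (ℓ : ZMod p) - s := by
    rintro i j ⟨hfi, hnext⟩ hres
    have hi : i < s := by
      by_contra h'
      push_neg at h'
      rw [hf0 i h'] at hfi; omega
    have hm : (j + (s - 1 - i)) % p = ℓ - 1 :=
      (residue_iff p s ℓ i j hl1 hlp hi).mp hres
    set m : ℕ := j + (s - 1 - i) with hm'
    have hbi : b i = m + 1 := by simp only [hbdef, hm']; omega
    have h1 : m / p * p + ℓ = b i := by
      have := hdiv1 m hm; omega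
    have h2 : m / p * p + (ℓ - 1) = m := by
      have := hdiv1 m hm; omega
    have hin : m / p * p + ℓ ∈ B := by rw [h1]; exact (hmemB _).mpr ⟨i, hi, rfl⟩
    have hin2 := hcol (m / p) hin
    rw [h2] at hin2
    obtain ⟨k, hk, hbk⟩ := (hmemB _).mp hin2
    have hik : i < k := by
      by_contra h'
      push_neg at h'
      rcases eq_or_lt_of_le h' with rfl | h''
      · omega
      · have := hbanti k i h'' hi; omega
    have hfk : f k ≤ j := le_trans (hfa (show i + 1 ≤ k by omega)) hnext
    simp only [hbdef] at hbk
    omega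
  -- the new partition g
  set δ : ℕ → ℕ := fun k => if b k % p = ℓ - 1 ∧ b k + 1 ∉ B then 1 else 0 with hδdef
  set g : ℕ → ℕ := fun k => if k < s then f k + δ k else 0 with hgdef
  have hgs0 : ∀ i, s ≤ i → g i = 0 := by
    intro i hi; simp only [hgdef]; rw [if_neg (by omega)]
  have hgval : ∀ k, k < s → g k = f k + δ k := by
    intro k hk; simp only [hgdef]; rw [if_pos hk]
  have hδD : ∀ k, δ k = 1 ↔ (b k % p = ℓ - 1 ∧ b k + 1 ∉ B) := by
    intro k
    simp only [hδdef]
    split_ifs with h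
    · simp [h]
    · simp [h]
  have hganti : Antitone g := by
    apply antitone_nat_of_succ_le
    intro k
    by_cases h1 : k + 1 < s
    · rw [hgval _ h1, hgval _ (by omega)]
      by_cases hd : b (k+1) % p = ℓ - 1 ∧ b (k+1) + 1 ∉ B
      · have hδ1 : δ (k+1) = 1 := by simp only [hδdef]; rw [if_pos hd]
        have hne : ¬ (1 ≤ k + 1 ∧ f k = f (k+1)) := by
          intro h'
          exact hd.2 ((hsuccB (k+1) h1).mpr (by simpa using h'))
        have : f (k+1) < f k := by
          have := hfa (show k ≤ k + 1 by omega)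
          omega
        have hδk : δ k ≤ 1 := by simp only [hδdef]; split_ifs <;> omega
        omega
      · have hδ0 : δ (k+1) = 0 := by simp only [hδdef]; rw [if_neg hd]
        have := hfa (show k ≤ k + 1 by omega)
        omega
    · rw [hgs0 _ (by omega)]; omega
  -- B' is the β-set of g
  have hB'eq : B' = (Finset.range s).image (fun k => g k + (s - 1 - k)) := by
    ext x
    rw [hB' x]
    simp only [Finset.mem_image, Finset.mem_range]
    have hval : ∀ k, k < s →
        g k + (s - 1 - k) = (if b k % p = ℓ - 1 ∧ b k + 1 ∉ B then b k + 1 else b k) := by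
      intro k hk
      rw [hgval _ hk]
      simp only [hδdef, hbdef]
      split_ifs <;> omega
    constructor
    · rintro (⟨hxB, hx1, hx2⟩ | ⟨a, rfl, h1⟩ | ⟨a, rfl, h1⟩)
      · obtain ⟨k, hk, rfl⟩ := (hmemB _).mp hxB
        refine ⟨k, hk, ?_⟩
        rw [hval k hk, if_neg (fun h => hx1 h.1)]
      · obtain ⟨k, hk, hbk⟩ := (hmemB _).mp h1
        by_cases hmem : b k + 1 ∈ B
        · obtain ⟨k', hk', hbk'⟩ := (hmemB _).mp hmem
          refine ⟨k', hk', ?_⟩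
          rw [hval k' hk', if_neg]
          · omega
          · rintro ⟨hc, -⟩
            rw [hbk', hbk] at hc
            have : (a * p + (ℓ - 1) + 1) = a * p + ℓ := by omega
            rw [this, hmod2 a] at hc
            omega
        · refine ⟨k, hk, ?_⟩
          rw [hval k hk, if_pos ⟨by rw [hbk]; exact hmod1 a, hmem⟩]
          omega
      · obtain ⟨k, hk, hbk⟩ := (hmemB _).mp (hcol a h1)
        refine ⟨k, hk, ?_⟩
        rw [hval k hk, if_neg]
        · omega
        · rintro ⟨-, hc⟩
          apply hc
          have : b k + 1 = a * p + ℓ := by omega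
          rw [this]; exact h1
    · rintro ⟨k, hk, rfl⟩
      rw [hval k hk]
      split_ifs with hcond
      · right; left
        refine ⟨b k / p, ?_, ?_⟩
        · have := hdiv1 (b k) hcond.1; omega
        · rw [hdiv1 (b k) hcond.1]; exact (hmemB _).mpr ⟨k, hk, rfl⟩
      · by_cases hc1 : b k % p = ℓ - 1
        · have hmem : b k + 1 ∈ B := by
            by_contra h'
            exact hcond ⟨hc1, h'⟩
          right; right
          refine ⟨b k / p, (hdiv1 (b k) hc1).symm, ?_⟩
          have : b k / p * p + ℓ = b k + 1 := by have := hdiv1 (b k) hc1; omega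
          rw [this]; exact hmem
        · by_cases hc2 : b k % p = ℓ
          · right; left
            refine ⟨b k / p, (hdiv2 (b k) hc2).symm, ?_⟩
            apply hcol
            rw [hdiv2 (b k) hc2]
            exact (hmemB _).mpr ⟨k, hk, rfl⟩
          · exact Or.inl ⟨(hmemB _).mpr ⟨k, hk, rfl⟩, hc1, hc2⟩
  have hpart : ∀ t, partOfSet B' t = g t := partOfSet_betaSet g hganti s hgs0 B' hB'eq
  -- sums
  have hsumf : ∑ i ∈ Finset.range s, f i = n := by
    have h1 : ∑ i ∈ Finset.range s, f i = ∑ i ∈ Finset.range (max s N), f i := by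
      apply Finset.sum_subset (Finset.range_subset_range.mpr (le_max_left _ _))
      intro x _ hx
      rw [Finset.mem_range] at hx
      exact hf0 x (by omega)
    have h2 : ∑ i ∈ Finset.range N, f i = ∑ i ∈ Finset.range (max s N), f i := by
      apply Finset.sum_subset (Finset.range_subset_range.mpr (le_max_right _ _))
      intro x _ hx
      rw [Finset.mem_range] at hx
      exact hN x (by omega)
    omega
  have hsumδ : ∑ i ∈ Finset.range s, δ i = D.card := by
    rw [hD, Finset.card_filter]
  have hsumg : ∑ i ∈ Finset.range s, g i = n + r := by
    have h1 : ∑ i ∈ Finset.range s, g i = ∑ i ∈ Finset.range s, (f i + δ i) :=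
      Finset.sum_congr rfl (fun i hi => hgval i (Finset.mem_range.mp hi))
    rw [h1, Finset.sum_add_distrib, hsumf, hsumδ, hrD]
  refine ⟨⟨by rw [hcardA, hrD], hremov⟩, ⟨⟨⟨?_, s, ?_⟩, s, ?_, ?_⟩, ?_⟩⟩
  · intro a c hac
    rw [hpart a, hpart c]
    exact hganti hac
  · intro i hi; rw [hpart i]; exact hgs0 i hi
  · intro i hi; rw [hpart i]; exact hgs0 i hi
  · rw [Finset.sum_congr rfl (fun i _ => hpart i)]; exact hsumg
  · intro i j
    rw [hpart i]
    by_cases hi : i < s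
    · rw [hgval i hi]
      constructor
      · intro h
        by_cases hj : j < f i
        · exact Or.inl hj
        · right
          have hδ1 : δ i = 1 := by
            simp only [hδdef]; simp only [hδdef] at h; split_ifs at h with hc
            · rw [if_pos hc]
            · omega
          have hj' : j = f i := by omega
          obtain hc := (hδD i).mp hδ1
          exact (haddable i j).mpr ⟨hi, hj', hc.1, hc.2⟩
      · rintro (h | h)
        · omega
        · obtain ⟨-, hj, hmod, hnot⟩ := (haddable i j).mp h
          have hδ1 : δ i = 1 := by simp only [hδdef]; rw [if_pos ⟨hmod, hnot⟩]
          omega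
    · rw [hgs0 i (by omega)]
      constructor
      · omega
      · rintro (h | h)
        · rw [hf0 i (by omega)] at h; omega
        · exact absurd ((haddable i j).mp h).1 hi
end

section
/- Let F be a field of odd characteristic p, let (α|β) be a pair of partitions with |α| + |β| = n, and let P be a Sylow p-subgroup of the Young subgroup S_α × S_β ≤ S_n. Then M(α|β) is isomorphic to a direct summand of the permutation module Ind_P^{S_n}(F); in particular, the signed Young permutation module M(α|β) is a direct summand of a permutation F[S_n]-module. -/
set_option synthInstance.maxHeartbeats 2000000
set_option maxHeartbeats 4000000


/-- The index of the block (of consecutive integers) containing `x ∈ {0, 1, 2, …}`, for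
the list `L` of block sizes. -/
def blockOf (L : List ℕ) (x : ℕ) : ℕ :=
  ((List.range (L.length + 1)).filter (fun k => (L.take k).sum ≤ x)).length

/-- The Young subgroup of `Perm (Fin n)` determined by consecutive blocks of sizes `L`:
all permutations preserving each block. -/
def youngSubgroup (n : ℕ) (L : List ℕ) : Subgroup (Equiv.Perm (Fin n)) where
  carrier := {g | ∀ x : Fin n, blockOf L ((g x : Fin n) : ℕ) = blockOf L (x : ℕ)}
  one_mem' := by intro x; rfl
  mul_mem' := by
    intro a b ha hb x
    have h1 := ha (b x)
    have h2 := hb x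
    simpa [Equiv.Perm.mul_apply] using h1.trans h2
  inv_mem' := by
    intro a ha x
    have h := ha (a⁻¹ x)
    simpa using h.symm

/-- An isomorphism of `F`-linear representations: an `F`-linear equivalence intertwining
the two actions. -/
def RepIso (F : Type*) [Field F] {G V W : Type*} [Group G]
    [AddCommGroup V] [Module F V] [AddCommGroup W] [Module F W]
    (ρ : Representation F G V) (τ : Representation F G W) : Prop :=
  ∃ e : V ≃ₗ[F] W, ∀ (g : G) (v : V), e (ρ g v) = τ g (e v)

/-- The carrier of the representation of `G` induced along `φ : H →* G` from `ρ`: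
`F[G] ⊗_{F[H]} V`, realized as the space of `ρ`-equivariant functions `G → V`. -/
def inducedCarrier {F : Type*} [Field F] {H G V : Type*} [Group H] [Group G]
    [AddCommGroup V] [Module F V] (φ : H →* G) (ρ : Representation F H V) :
    Submodule F (G → V) where
  carrier := {f | ∀ (h : H) (g : G), f (φ h * g) = ρ h (f g)}
  add_mem' := by intro f f' hf hf' h g; simp [hf h g, hf' h g]
  zero_mem' := by intro h g; simp
  smul_mem' := by intro a f hf h g; simp [hf h g]

/-- The representation of `G` induced along `φ : H →* G` from `ρ`. -/
def inducedRep {F : Type*} [Field F] {H G V : Type*} [Group H] [Group G]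
    [AddCommGroup V] [Module F V] (φ : H →* G) (ρ : Representation F H V) :
    Representation F G (inducedCarrier φ ρ) where
  toFun σ :=
    { toFun := fun f => ⟨fun g => (f : G → V) (g * σ), fun h g => by
        simpa [mul_assoc] using f.2 h (g * σ)⟩
      map_add' := by intro f f'; rfl
      map_smul' := by intro a f; rfl }
  map_one' := by
    apply LinearMap.ext; intro f; apply Subtype.ext; funext g; simp
  map_mul' := by
    intro σ τ
    apply LinearMap.ext; intro f; apply Subtype.ext; funext g
    simp [Module.End.mul_apply, mul_assoc]

/-- The one-dimensional representation attached to a character `χ : G →* Fˣ`. -/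
def charRep (F : Type*) [Field F] {G : Type*} [Group G] (χ : G →* Fˣ) :
    Representation F G F :=
  (DistribMulAction.toModuleEnd F F).comp χ


/-- `L` is (the list of parts of) a partition: weakly decreasing positive entries. -/
def IsPartitionList (L : List ℕ) : Prop :=
  L.Pairwise (· ≥ ·) ∧ ∀ x ∈ L, 0 < x

/-- `χ` is the signed character of the Young subgroup `H = S_α × S_β` of `S_n`
(where `n₁ = |α|`): an element acts by the sign of the permutation it induces on the
last `n - n₁` points. -/
def IsSignedChar (F : Type*) [Field F] (n n₁ : ℕ)
    (H : Subgroup (Equiv.Perm (Fin n))) (χ : H →* Fˣ) : Prop :=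
  ∀ (g : H) (g' : Equiv.Perm (Fin n)),
    (∀ x : Fin n,
      (n₁ ≤ (x : ℕ) → g' x = (g : Equiv.Perm (Fin n)) x) ∧ ((x : ℕ) < n₁ → g' x = x)) →
    (χ g : F) = ((Equiv.Perm.sign g' : ℤ) : F)

/-- `ρ` is isomorphic to a direct summand of `τ`: there are equivariant linear maps
`i : V → W` and `π : W → V` with `π ∘ i = id`. -/
def IsDirectSummand (F : Type*) [Field F] {G V W : Type*} [Group G]
    [AddCommGroup V] [Module F V] [AddCommGroup W] [Module F W]
    (ρ : Representation F G V) (τ : Representation F G W) : Prop :=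
  ∃ (i : V →ₗ[F] W) (π : W →ₗ[F] V),
    (∀ g v, i (ρ g v) = τ g (i v)) ∧ (∀ g w, π (τ g w) = ρ g (π w)) ∧
    ∀ v, π (i v) = v

/-- The permutation representation on `X →₀ F` (the old `Representation.ofMulAction`). -/
noncomputable def ofMulActionFinsupp (k G H : Type*) [CommSemiring k] [Monoid G] [MulAction G H] :
    Representation k G (H →₀ k) where
  toFun g := Finsupp.lmapDomain k k (g • ·)
  map_one' := by ext x y; simp
  map_mul' x y := by ext z w; simp [mul_smul]

lemma blockOf_le_of_lt (α β : List ℕ) (x : ℕ) (hx : x < α.sum) :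
    blockOf (α ++ β) x ≤ α.length := by
  unfold blockOf
  rw [← List.countP_eq_length_filter]
  have h1 : (α ++ β).length + 1 = α.length + (β.length + 1) := by
    simp [List.length_append]; ring
  rw [h1, List.range_add, List.countP_append]
  have h2 : List.countP (fun k => decide (((α ++ β).take k).sum ≤ x))
      ((List.range (β.length + 1)).map (α.length + ·)) = 0 := by
    rw [List.countP_eq_zero]
    intro a ha
    simp only [List.mem_map] at ha
    obtain ⟨b, _, rfl⟩ := ha
    simp only [decide_eq_true_eq]
    intro hc
    have : ((α ++ β).take (α.length + b)).sum = α.sum + (β.take b).sum := by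
      rw [List.take_append]
      have h3 : α.take (α.length + b) = α := List.take_of_length_le (by omega)
      simp [h3]
    omega
  rw [h2, Nat.add_zero]
  exact le_trans List.countP_le_length (by simp)

lemma lt_blockOf_of_le (α β : List ℕ) (x : ℕ) (hx : α.sum ≤ x) :
    α.length < blockOf (α ++ β) x := by
  unfold blockOf
  rw [← List.countP_eq_length_filter]
  have hsub : (List.range (α.length + 1)).Sublist (List.range ((α ++ β).length + 1)) := by
    apply List.range_sublist.mpr
    simp [List.length_append]
  have h1 : List.countP (fun k => decide (((α ++ β).take k).sum ≤ x))
      (List.range (α.length + 1)) = α.length + 1 := by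
    have h0 := List.countP_eq_length (p := fun k => decide (((α ++ β).take k).sum ≤ x))
      (l := List.range (α.length + 1))
    rw [List.length_range] at h0
    rw [h0]
    intro a ha
    simp only [List.mem_range] at ha
    simp only [decide_eq_true_eq]
    have h4 : ((α ++ β).take a).sum = (α.take a).sum := by
      rw [List.take_append]
      have : a - α.length = 0 := by omega
      simp [this]
    rw [h4]
    calc (α.take a).sum ≤ (α.take a).sum + (α.drop a).sum := by omega
      _ = α.sum := by rw [← List.sum_append, List.take_append_drop]
      _ ≤ x := hx
  have := hsub.countP_le (p := fun k => decide (((α ++ β).take k).sum ≤ x))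
  omega

/-- Let `F` be a field of odd characteristic `p`, `(α|β)` a pair of
partitions with `|α| + |β| = n`, and `P` a Sylow `p`-subgroup of the Young subgroup
`S_α × S_β ≤ S_n`.  Then the signed Young permutation module `M(α|β)` is isomorphic to a
direct summand of the permutation module `Ind_P^{S_n}(F)`; in particular it is a direct
summand of a permutation `F[S_n]`-module. -/
theorem signed_young_permutation_module_is_p_permutation (F : Type) [Field F]
    (p : ℕ) [CharP F p] (hp : p.Prime) (hodd : Odd p)
    (n : ℕ) (α β : List ℕ) (hα : IsPartitionList α) (hβ : IsPartitionList β)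
    (hsum : α.sum + β.sum = n)
    (χ : youngSubgroup n (α ++ β) →* Fˣ)
    (hχ : IsSignedChar F n α.sum (youngSubgroup n (α ++ β)) χ)
    (Q : Sylow p (youngSubgroup n (α ++ β)))
    (P : Subgroup (Equiv.Perm (Fin n)))
    (hP : P = Subgroup.map (youngSubgroup n (α ++ β)).subtype (Q : Subgroup (youngSubgroup n (α ++ β)))) :
    IsDirectSummand F
      (V := inducedCarrier (youngSubgroup n (α ++ β)).subtype (charRep F χ))
      (W := inducedCarrier P.subtype (Representation.trivial F (G := P) (V := F)))
      (inducedRep (youngSubgroup n (α ++ β)).subtype (charRep F χ))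
      (inducedRep P.subtype (Representation.trivial F (G := P) (V := F))) ∧
    ∃ (X : Type) (_ : MulAction (Equiv.Perm (Fin n)) X),
      IsDirectSummand F
        (V := inducedCarrier (youngSubgroup n (α ++ β)).subtype (charRep F χ))
        (W := X →₀ F)
        (inducedRep (youngSubgroup n (α ++ β)).subtype (charRep F χ))
        (ofMulActionFinsupp F (Equiv.Perm (Fin n)) X) := by
  classical
  haveI : Fact p.Prime := ⟨hp⟩
  -- character values in F
  let c : youngSubgroup n (α ++ β) → F := fun h => ((χ h : Fˣ) : F)
  have hc_mul : ∀ a b : youngSubgroup n (α ++ β), c (a * b) = c a * c b := by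
    intro a b; show ((χ (a*b) : Fˣ) : F) = _; rw [map_mul]; push_cast; ring
  have hc_inv : ∀ a : youngSubgroup n (α ++ β), c a * c a⁻¹ = 1 := by
    intro a
    show ((χ a : Fˣ) : F) * ((χ a⁻¹ : Fˣ) : F) = 1
    rw [← Units.val_mul, ← map_mul, mul_inv_cancel, map_one, Units.val_one]
  -- Step 1 : character values are ±1
  have hval : ∀ g : youngSubgroup n (α ++ β), c g = 1 ∨ c g = -1 := by
    intro g
    have hmemg : ∀ x : Fin n, blockOf (α ++ β) (((g : Equiv.Perm (Fin n)) x : Fin n) : ℕ)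
        = blockOf (α ++ β) (x : ℕ) := g.2
    have hpres : ∀ x : Fin n,
        α.sum ≤ (x : ℕ) ↔ α.sum ≤ (((g : Equiv.Perm (Fin n)) x : Fin n) : ℕ) := by
      intro x
      constructor
      · intro h
        by_contra h'
        have h1 := lt_blockOf_of_le α β (x : ℕ) h
        have h2 := blockOf_le_of_lt α β
          (((g : Equiv.Perm (Fin n)) x : Fin n) : ℕ) (lt_of_not_ge h')
        have h3 := hmemg x
        omega
      · intro h
        by_contra h'
        have h1 := lt_blockOf_of_le α β
          (((g : Equiv.Perm (Fin n)) x : Fin n) : ℕ) h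
        have h2 := blockOf_le_of_lt α β (x : ℕ) (lt_of_not_ge h')
        have h3 := hmemg x
        omega
    set g' : Equiv.Perm (Fin n) :=
      Equiv.Perm.ofSubtype ((g : Equiv.Perm (Fin n)).subtypePerm (p := fun y : Fin n => α.sum ≤ (y : ℕ)) (fun x => (hpres x).symm)) with hg'
    have hag : ∀ x : Fin n,
        (α.sum ≤ (x : ℕ) → g' x = (g : Equiv.Perm (Fin n)) x) ∧
        ((x : ℕ) < α.sum → g' x = x) := by
      intro x
      constructor
      · intro hx
        exact Equiv.Perm.ofSubtype_apply_of_mem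
          (p := fun y : Fin n => α.sum ≤ (y : ℕ))
          ((g : Equiv.Perm (Fin n)).subtypePerm (p := fun y : Fin n => α.sum ≤ (y : ℕ)) (fun x => (hpres x).symm)) hx
      · intro hx
        exact Equiv.Perm.ofSubtype_apply_of_not_mem
          (p := fun y : Fin n => α.sum ≤ (y : ℕ))
          ((g : Equiv.Perm (Fin n)).subtypePerm (p := fun y : Fin n => α.sum ≤ (y : ℕ)) (fun x => (hpres x).symm)) (by omega)
    have h := hχ g g' hag
    rcases Int.units_eq_one_or (Equiv.Perm.sign g') with hs | hs
    · left; show ((χ g : Fˣ) : F) = 1; rw [h, hs]; simp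
    · right; show ((χ g : Fˣ) : F) = -1; rw [h, hs]; simp
  -- Step 2 : character is trivial on Q
  have hQ1 : ∀ g : youngSubgroup n (α ++ β),
      g ∈ (Q : Subgroup (youngSubgroup n (α ++ β))) → c g = 1 := by
    intro g hg
    obtain ⟨k, hk⟩ := Q.isPGroup' ⟨g, hg⟩
    have hk' : g ^ (p ^ k) = 1 := by
      have := congrArg (Subtype.val) hk
      simpa using this
    have hpow : c g ^ (p ^ k) = 1 := by
      have h1 : ((χ (g ^ (p ^ k)) : Fˣ) : F) = 1 := by rw [hk', map_one, Units.val_one]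
      rw [map_pow] at h1
      show ((χ g : Fˣ) : F) ^ p ^ k = 1
      rw [← h1]
      push_cast
      ring
    rcases hval g with h | h
    · exact h
    · exfalso
      rw [h, (hodd.pow).neg_one_pow] at hpow
      have h2 : (2 : F) = 0 := by linear_combination -hpow
      have h2' : ((2 : ℕ) : F) = 0 := by exact_mod_cast h2
      have hdvd := (CharP.cast_eq_zero_iff F p 2).mp h2'
      have hle := Nat.le_of_dvd (by norm_num) hdvd
      have hp2 : p = 2 := le_antisymm hle hp.two_le
      rw [hp2] at hodd
      exact absurd hodd (by decide)
  -- abbreviations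
  have hVmem : ∀ f : (inducedCarrier (youngSubgroup n (α ++ β)).subtype (charRep F χ)),
      ∀ (h : youngSubgroup n (α ++ β)) (g : Equiv.Perm (Fin n)),
      f.1 ((h : Equiv.Perm (Fin n)) * g) = c h * f.1 g := fun f => f.2
  have hWmem : ∀ f : (inducedCarrier P.subtype (Representation.trivial F (G := P) (V := F))),
      ∀ (q : P) (g : Equiv.Perm (Fin n)),
      f.1 ((q : Equiv.Perm (Fin n)) * g) = f.1 g := fun f => f.2
  have hPmem : ∀ y : youngSubgroup n (α ++ β),
      y ∈ (Q : Subgroup (youngSubgroup n (α ++ β))) → (y : Equiv.Perm (Fin n)) ∈ P := by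
    intro y hy; rw [hP, Subgroup.mem_map]; exact ⟨y, hy, rfl⟩
  have hfP : ∀ (f : (inducedCarrier (youngSubgroup n (α ++ β)).subtype (charRep F χ)))
      (x : Equiv.Perm (Fin n)), x ∈ P → ∀ g : Equiv.Perm (Fin n), f.1 (x * g) = f.1 g := by
    intro f x hx g
    rw [hP, Subgroup.mem_map] at hx
    obtain ⟨y, hy, rfl⟩ := hx
    have hv := hVmem f y g
    rw [hQ1 y hy, one_mul] at hv
    exact hv
  -- quotient setup
  letI : Fintype (youngSubgroup n (α ++ β) ⧸ (Q : Subgroup (youngSubgroup n (α ++ β)))) :=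
    Fintype.ofFinite _
  set m : ℕ := Fintype.card
    (youngSubgroup n (α ++ β) ⧸ (Q : Subgroup (youngSubgroup n (α ++ β)))) with hm
  have hmF : (m : F) ≠ 0 := by
    have hidx : ¬ p ∣ (Q : Subgroup (youngSubgroup n (α ++ β))).index := Sylow.not_dvd_index Q
    rw [Ne, CharP.cast_eq_zero_iff F p]
    intro hdvd
    exact hidx (by rwa [Subgroup.index, Nat.card_eq_fintype_card])
  -- coset independence of the averaging terms
  have hcoset : ∀ (f : Equiv.Perm (Fin n) → F),
      (∀ x ∈ P, ∀ g : Equiv.Perm (Fin n), f (x * g) = f g) →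
      ∀ (a b : youngSubgroup n (α ++ β)),
      (QuotientGroup.mk a : youngSubgroup n (α ++ β) ⧸ (Q : Subgroup (youngSubgroup n (α ++ β))))
        = QuotientGroup.mk b →
      ∀ g : Equiv.Perm (Fin n),
        c a * f ((a : Equiv.Perm (Fin n))⁻¹ * g) = c b * f ((b : Equiv.Perm (Fin n))⁻¹ * g) := by
    intro f hf a b hab g
    have hq : a⁻¹ * b ∈ (Q : Subgroup (youngSubgroup n (α ++ β))) := QuotientGroup.eq.mp hab
    have hb : b = a * (a⁻¹ * b) := by group
    have hcb : c b = c a := by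
      conv_lhs => rw [hb]
      rw [hc_mul, hQ1 _ hq, mul_one]
    have hfb : f ((b : Equiv.Perm (Fin n))⁻¹ * g) = f ((a : Equiv.Perm (Fin n))⁻¹ * g) := by
      conv_lhs => rw [hb]
      have h1 : ((a * (a⁻¹ * b) : youngSubgroup n (α ++ β)) : Equiv.Perm (Fin n))⁻¹ * g
          = (((a⁻¹ * b)⁻¹ : youngSubgroup n (α ++ β)) : Equiv.Perm (Fin n))
            * ((a : Equiv.Perm (Fin n))⁻¹ * g) := by
        push_cast
        group
      rw [h1]
      exact hf _ (hPmem _ (inv_mem hq)) _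
    rw [hcb, hfb]
  -- averaging function
  let T : (Equiv.Perm (Fin n) → F) → Equiv.Perm (Fin n) → F := fun f g =>
    ∑ cc : youngSubgroup n (α ++ β) ⧸ (Q : Subgroup (youngSubgroup n (α ++ β))),
      c (Quotient.out cc) * f (((Quotient.out cc : youngSubgroup n (α ++ β)) :
        Equiv.Perm (Fin n))⁻¹ * g)
  -- T is linear in f and satisfies the equivariance relation
  have hTequiv : ∀ (f : Equiv.Perm (Fin n) → F),
      (∀ x ∈ P, ∀ g : Equiv.Perm (Fin n), f (x * g) = f g) →
      ∀ (h : youngSubgroup n (α ++ β)) (g : Equiv.Perm (Fin n)),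
      T f ((h : Equiv.Perm (Fin n)) * g) = c h * T f g := by
    intro f hf h g
    show (∑ cc, _) = c h * ∑ cc, _
    rw [Finset.mul_sum]
    refine Fintype.sum_equiv (MulAction.toPerm h⁻¹) _ _ ?_
    intro cc
    show c (Quotient.out cc)
        * f (((Quotient.out cc : youngSubgroup n (α ++ β)) : Equiv.Perm (Fin n))⁻¹
            * ((h : Equiv.Perm (Fin n)) * g))
      = c h * (c (Quotient.out (h⁻¹ • cc))
        * f (((Quotient.out (h⁻¹ • cc) : youngSubgroup n (α ++ β)) : Equiv.Perm (Fin n))⁻¹ * g))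
    have e2' := MulAction.Quotient.smul_mk (Q : Subgroup (youngSubgroup n (α ++ β))) h⁻¹
      (Quotient.out cc)
    rw [smul_eq_mul, QuotientGroup.out_eq'] at e2'
    have e2 : (QuotientGroup.mk (Quotient.out (h⁻¹ • cc)) :
        youngSubgroup n (α ++ β) ⧸ (Q : Subgroup (youngSubgroup n (α ++ β))))
        = QuotientGroup.mk (h⁻¹ * Quotient.out cc) := by
      rw [QuotientGroup.out_eq']
      exact e2'
    have e3 := hcoset f hf _ _ e2 g
    have e4 : ((h⁻¹ * Quotient.out cc : youngSubgroup n (α ++ β)) : Equiv.Perm (Fin n))⁻¹ * g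
        = ((Quotient.out cc : youngSubgroup n (α ++ β)) : Equiv.Perm (Fin n))⁻¹
          * ((h : Equiv.Perm (Fin n)) * g) := by
      push_cast
      group
    rw [e3, hc_mul, e4]
    linear_combination (-(c (Quotient.out cc)
      * f (((Quotient.out cc : youngSubgroup n (α ++ β)) : Equiv.Perm (Fin n))⁻¹
          * ((h : Equiv.Perm (Fin n)) * g)))) * hc_inv h
  -- the key averaging identity
  have hπ0 : ∀ (v : inducedCarrier (youngSubgroup n (α ++ β)).subtype (charRep F χ))
      (g : Equiv.Perm (Fin n)), (m : F)⁻¹ * T v.1 g = v.1 g := by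
    intro v g
    have hterm : ∀ cc : youngSubgroup n (α ++ β) ⧸ (Q : Subgroup (youngSubgroup n (α ++ β))),
        c (Quotient.out cc)
          * v.1 (((Quotient.out cc : youngSubgroup n (α ++ β)) : Equiv.Perm (Fin n))⁻¹ * g)
        = v.1 g := by
      intro cc
      have hv := hVmem v (Quotient.out cc)⁻¹ g
      have hco : (((Quotient.out cc)⁻¹ : youngSubgroup n (α ++ β)) : Equiv.Perm (Fin n))
          = ((Quotient.out cc : youngSubgroup n (α ++ β)) : Equiv.Perm (Fin n))⁻¹ := rfl
      rw [hco] at hv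
      rw [hv]
      linear_combination (v.1 g) * hc_inv (Quotient.out cc)
    show (m : F)⁻¹ * (∑ cc, _) = v.1 g
    rw [Finset.sum_congr rfl (fun cc _ => hterm cc), Finset.sum_const, Finset.card_univ,
      nsmul_eq_mul, ← hm, ← mul_assoc, inv_mul_cancel₀ hmF, one_mul]
  -- the inclusion map
  let i : (inducedCarrier (youngSubgroup n (α ++ β)).subtype (charRep F χ)) →ₗ[F]
      (inducedCarrier P.subtype (Representation.trivial F (G := P) (V := F))) :=
    { toFun := fun f => ⟨f.1, fun q g => hfP f (q : Equiv.Perm (Fin n)) q.2 g⟩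
      map_add' := fun f f' => rfl
      map_smul' := fun a f => rfl }
  -- the averaging projection
  let π : (inducedCarrier P.subtype (Representation.trivial F (G := P) (V := F))) →ₗ[F]
      (inducedCarrier (youngSubgroup n (α ++ β)).subtype (charRep F χ)) :=
    { toFun := fun f => ⟨fun g => (m : F)⁻¹ * T f.1 g, by
        intro h g
        have hfPinv : ∀ x ∈ P, ∀ g' : Equiv.Perm (Fin n), f.1 (x * g') = f.1 g' := by
          intro x hx g'
          exact hWmem f ⟨x, hx⟩ g'
        show (m : F)⁻¹ * T f.1 ((h : Equiv.Perm (Fin n)) * g)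
          = ((χ h : Fˣ) : F) * ((m : F)⁻¹ * T f.1 g)
        rw [hTequiv f.1 hfPinv h g]
        show (m : F)⁻¹ * (c h * T f.1 g) = c h * ((m : F)⁻¹ * T f.1 g)
        ring⟩
      map_add' := by
        intro f f'
        apply Subtype.ext
        funext g
        show (m : F)⁻¹ * T (f.1 + f'.1) g = (m : F)⁻¹ * T f.1 g + (m : F)⁻¹ * T f'.1 g
        have : T (f.1 + f'.1) g = T f.1 g + T f'.1 g := by
          show (∑ cc, _) = (∑ cc, _) + (∑ cc, _)
          rw [← Finset.sum_add_distrib]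
          exact Finset.sum_congr rfl (fun cc _ => by simp [mul_add])
        rw [this]
        ring
      map_smul' := by
        intro a f
        apply Subtype.ext
        funext g
        show (m : F)⁻¹ * T (a • f.1) g = a * ((m : F)⁻¹ * T f.1 g)
        have : T (a • f.1) g = a * T f.1 g := by
          show (∑ cc, _) = a * (∑ cc, _)
          rw [Finset.mul_sum]
          exact Finset.sum_congr rfl (fun cc _ => by
            simp [Pi.smul_apply, smul_eq_mul]; ring)
        rw [this]
        ring }
  have hiequiv : ∀ (σ : Equiv.Perm (Fin n))
      (v : inducedCarrier (youngSubgroup n (α ++ β)).subtype (charRep F χ)),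
      i ((inducedRep (youngSubgroup n (α ++ β)).subtype (charRep F χ)) σ v)
      = (inducedRep P.subtype (Representation.trivial F (G := P) (V := F))) σ (i v) := by
    intro σ v
    apply Subtype.ext
    rfl
  have hπequiv : ∀ (σ : Equiv.Perm (Fin n))
      (w : inducedCarrier P.subtype (Representation.trivial F (G := P) (V := F))),
      π ((inducedRep P.subtype (Representation.trivial F (G := P) (V := F))) σ w)
      = (inducedRep (youngSubgroup n (α ++ β)).subtype (charRep F χ)) σ (π w) := by
    intro σ w
    apply Subtype.ext
    funext g
    show (m : F)⁻¹ * T (fun g' => w.1 (g' * σ)) g = (m : F)⁻¹ * T w.1 (g * σ)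
    congr 1
  have hπi : ∀ v, π (i v) = v := by
    intro v
    apply Subtype.ext
    funext g
    exact hπ0 v g
  constructor
  · exact ⟨i, π, hiequiv, hπequiv, hπi⟩
  -- Part 2 : permutation module on G ⧸ P
  · letI : Fintype (Equiv.Perm (Fin n) ⧸ P) := Fintype.ofFinite _
    refine ⟨Equiv.Perm (Fin n) ⧸ P, inferInstance, ?_⟩
    -- evaluation of the permutation action
    have hofapp : ∀ (u : (Equiv.Perm (Fin n) ⧸ P) →₀ F) (σ : Equiv.Perm (Fin n))
        (z : Equiv.Perm (Fin n) ⧸ P),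
        ((ofMulActionFinsupp F (Equiv.Perm (Fin n)) (Equiv.Perm (Fin n) ⧸ P)) σ u) z
        = u (σ⁻¹ • z) := by
      intro u σ z
      show Finsupp.mapDomain (σ • ·) u z = u (σ⁻¹ • z)
      conv_lhs => rw [show z = σ • (σ⁻¹ • z) from (smul_inv_smul σ z).symm]
      exact Finsupp.mapDomain_apply (MulAction.injective σ) u _
    -- the embedding into the permutation module
    let i₂ : (inducedCarrier (youngSubgroup n (α ++ β)).subtype (charRep F χ)) →ₗ[F]
        ((Equiv.Perm (Fin n) ⧸ P) →₀ F) :=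
      { toFun := fun f => ∑ cc : Equiv.Perm (Fin n) ⧸ P,
          f.1 (Quotient.out cc)⁻¹ • Finsupp.single cc (1 : F)
        map_add' := by
          intro f f'
          show (∑ cc : Equiv.Perm (Fin n) ⧸ P, (f.1 + f'.1) (Quotient.out cc)⁻¹
              • Finsupp.single cc (1 : F)) = _
          rw [← Finset.sum_add_distrib]
          exact Finset.sum_congr rfl (fun cc _ => by
            simp [Pi.add_apply, add_smul])
        map_smul' := by
          intro a f
          show (∑ cc : Equiv.Perm (Fin n) ⧸ P, (a • f.1) (Quotient.out cc)⁻¹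
              • Finsupp.single cc (1 : F)) = _
          rw [RingHom.id_apply, Finset.smul_sum]
          exact Finset.sum_congr rfl (fun cc _ => by
            simp [Pi.smul_apply, smul_smul]) }
    -- the reading map back into functions on the group
    have hWprop : ∀ (u : (Equiv.Perm (Fin n) ⧸ P) →₀ F), ∀ x ∈ P,
        ∀ g : Equiv.Perm (Fin n),
        (fun y : Equiv.Perm (Fin n) => u (QuotientGroup.mk y⁻¹)) (x * g)
        = (fun y : Equiv.Perm (Fin n) => u (QuotientGroup.mk y⁻¹)) g := by
      intro u x hx g
      show u (QuotientGroup.mk (x * g)⁻¹) = u (QuotientGroup.mk g⁻¹)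
      rw [mul_inv_rev, QuotientGroup.mk_mul_of_mem g⁻¹ (inv_mem hx)]
    let π₂ : ((Equiv.Perm (Fin n) ⧸ P) →₀ F) →ₗ[F]
        (inducedCarrier (youngSubgroup n (α ++ β)).subtype (charRep F χ)) :=
      { toFun := fun u => ⟨fun g =>
          (m : F)⁻¹ * T (fun y => u (QuotientGroup.mk y⁻¹)) g, by
            intro h g
            show (m : F)⁻¹ * T (fun y => u (QuotientGroup.mk y⁻¹))
                ((h : Equiv.Perm (Fin n)) * g)
              = ((χ h : Fˣ) : F) * ((m : F)⁻¹
                * T (fun y => u (QuotientGroup.mk y⁻¹)) g)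
            rw [hTequiv (fun y => u (QuotientGroup.mk y⁻¹)) (hWprop u) h g]
            show (m : F)⁻¹ * (c h * _) = c h * ((m : F)⁻¹ * _)
            ring⟩
        map_add' := by
          intro u u'
          apply Subtype.ext
          funext g
          show (m : F)⁻¹ * T (fun y => (u + u') (QuotientGroup.mk y⁻¹)) g
            = (m : F)⁻¹ * T (fun y => u (QuotientGroup.mk y⁻¹)) g
              + (m : F)⁻¹ * T (fun y => u' (QuotientGroup.mk y⁻¹)) g
          have : T (fun y => (u + u') (QuotientGroup.mk y⁻¹)) g
              = T (fun y => u (QuotientGroup.mk y⁻¹)) g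
                + T (fun y => u' (QuotientGroup.mk y⁻¹)) g := by
            show (∑ cc, _) = (∑ cc, _) + (∑ cc, _)
            rw [← Finset.sum_add_distrib]
            exact Finset.sum_congr rfl (fun cc _ => by
              simp [Finsupp.add_apply, mul_add])
          rw [this]
          ring
        map_smul' := by
          intro a u
          apply Subtype.ext
          funext g
          show (m : F)⁻¹ * T (fun y => (a • u) (QuotientGroup.mk y⁻¹)) g
            = a * ((m : F)⁻¹ * T (fun y => u (QuotientGroup.mk y⁻¹)) g)
          have : T (fun y => (a • u) (QuotientGroup.mk y⁻¹)) g
              = a * T (fun y => u (QuotientGroup.mk y⁻¹)) g := by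
            show (∑ cc, _) = a * (∑ cc, _)
            rw [Finset.mul_sum]
            exact Finset.sum_congr rfl (fun cc _ => by
              simp [Finsupp.smul_apply, smul_eq_mul]; ring)
          rw [this]
          ring }
    refine ⟨i₂, π₂, ?_, ?_, ?_⟩
    · -- equivariance of i₂
      intro σ v
      show (∑ cc : Equiv.Perm (Fin n) ⧸ P,
          v.1 ((Quotient.out cc)⁻¹ * σ) • Finsupp.single cc (1 : F))
        = (ofMulActionFinsupp F (Equiv.Perm (Fin n)) (Equiv.Perm (Fin n) ⧸ P)) σ
          (∑ cc : Equiv.Perm (Fin n) ⧸ P,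
            v.1 (Quotient.out cc)⁻¹ • Finsupp.single cc (1 : F))
      rw [map_sum]
      refine Fintype.sum_equiv (MulAction.toPerm σ⁻¹) _ _ ?_
      intro cc
      show v.1 ((Quotient.out cc)⁻¹ * σ) • Finsupp.single cc (1 : F)
        = (ofMulActionFinsupp F (Equiv.Perm (Fin n)) (Equiv.Perm (Fin n) ⧸ P)) σ
            (v.1 (Quotient.out (σ⁻¹ • cc))⁻¹ • Finsupp.single (σ⁻¹ • cc) (1 : F))
      rw [map_smul, show ∀ (x : Equiv.Perm (Fin n) ⧸ P) (r : F), ofMulActionFinsupp F (Equiv.Perm (Fin n)) (Equiv.Perm (Fin n) ⧸ P) σ (Finsupp.single x r) = Finsupp.single (σ • x) r from fun x r => Finsupp.mapDomain_single, smul_inv_smul]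
      congr 1
      -- v.1 ((out cc)⁻¹ * σ) = v.1 ((out (σ⁻¹ • cc))⁻¹)
      have e2' := MulAction.Quotient.smul_mk P σ⁻¹ (Quotient.out cc)
      rw [QuotientGroup.out_eq'] at e2'
      have e2 : (QuotientGroup.mk (σ⁻¹ * Quotient.out cc) : Equiv.Perm (Fin n) ⧸ P)
          = QuotientGroup.mk (Quotient.out (σ⁻¹ • cc)) := by
        rw [QuotientGroup.out_eq']
        exact e2'.symm
      have hq : (σ⁻¹ * Quotient.out cc)⁻¹ * Quotient.out (σ⁻¹ • cc) ∈ P :=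
        QuotientGroup.eq.mp e2
      have heq : Quotient.out (σ⁻¹ • cc)
          = (σ⁻¹ * Quotient.out cc) * ((σ⁻¹ * Quotient.out cc)⁻¹ * Quotient.out (σ⁻¹ • cc)) := by
        group
      rw [heq]
      have hinv : ((σ⁻¹ * Quotient.out cc)
          * ((σ⁻¹ * Quotient.out cc)⁻¹ * Quotient.out (σ⁻¹ • cc)))⁻¹
          = ((σ⁻¹ * Quotient.out cc)⁻¹ * Quotient.out (σ⁻¹ • cc))⁻¹
            * ((Quotient.out cc)⁻¹ * σ) := by
        group
      rw [hinv, hfP v _ (inv_mem hq) _]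
    · -- equivariance of π₂
      intro σ u
      apply Subtype.ext
      funext g
      show (m : F)⁻¹ * T (fun y =>
          ((ofMulActionFinsupp F (Equiv.Perm (Fin n)) (Equiv.Perm (Fin n) ⧸ P)) σ u)
            (QuotientGroup.mk y⁻¹)) g
        = (m : F)⁻¹ * T (fun y => u (QuotientGroup.mk y⁻¹)) (g * σ)
      congr 1
      show (∑ cc, _) = (∑ cc, _)
      refine Finset.sum_congr rfl (fun cc _ => ?_)
      congr 1
      show ((ofMulActionFinsupp F (Equiv.Perm (Fin n)) (Equiv.Perm (Fin n) ⧸ P)) σ u)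
          (QuotientGroup.mk ((Quotient.out cc)⁻¹ * g)⁻¹)
        = u (QuotientGroup.mk ((Quotient.out cc)⁻¹ * (g * σ))⁻¹)
      rw [hofapp, MulAction.Quotient.smul_mk]
      congr 1
      done
    · -- π₂ ∘ i₂ = id
      intro v
      apply Subtype.ext
      funext g
      show (m : F)⁻¹ * T (fun y => (∑ cc : Equiv.Perm (Fin n) ⧸ P,
          v.1 (Quotient.out cc)⁻¹ • Finsupp.single cc (1 : F)) (QuotientGroup.mk y⁻¹)) g
        = v.1 g
      have hev : (fun y : Equiv.Perm (Fin n) => (∑ cc : Equiv.Perm (Fin n) ⧸ P,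
          v.1 (Quotient.out cc)⁻¹ • Finsupp.single cc (1 : F)) (QuotientGroup.mk y⁻¹))
          = v.1 := by
        funext y
        show (∑ cc : Equiv.Perm (Fin n) ⧸ P,
            v.1 (Quotient.out cc)⁻¹ • Finsupp.single cc (1 : F)) (QuotientGroup.mk y⁻¹)
          = v.1 y
        rw [Finset.sum_apply']
        rw [Finset.sum_eq_single (QuotientGroup.mk y⁻¹ : Equiv.Perm (Fin n) ⧸ P)]
        · rw [Finsupp.smul_apply, Finsupp.single_apply, if_pos rfl, smul_eq_mul, mul_one]
          -- v.1 (out ⟦y⁻¹⟧)⁻¹ = v.1 y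
          have hq : y * Quotient.out (QuotientGroup.mk y⁻¹ : Equiv.Perm (Fin n) ⧸ P) ∈ P := by
            have := (QuotientGroup.out_eq' (QuotientGroup.mk y⁻¹ : Equiv.Perm (Fin n) ⧸ P)).symm
            have h2 := QuotientGroup.eq.mp this
            simpa using h2
          have heq : (Quotient.out (QuotientGroup.mk y⁻¹ : Equiv.Perm (Fin n) ⧸ P))⁻¹
              = (y * Quotient.out (QuotientGroup.mk y⁻¹ : Equiv.Perm (Fin n) ⧸ P))⁻¹ * y := by
            group
          rw [heq, hfP v _ (inv_mem hq) y]
        · intro b _ hb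
          rw [Finsupp.smul_apply, Finsupp.single_apply, if_neg hb, smul_zero]
        · intro hy
          exact absurd (Finset.mem_univ _) hy
      rw [hev]
      exact hπ0 v g
end
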